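/- arXiv:1901.07616 — 9 statements merged into one kernel-verified Lean document; each statement's English description precedes it below -/
import Mathlib

section
/- Let Q be a CCS. A point z ∈ Q is an extreme point of Q if and only if the only regular Borel probability measure ν on Q having z as a barycenter is the Dirac measure δ_z. -/
open MeasureTheory Set
open scoped ENNReal Classical

section Aux

variable {X : Type*} [AddCommGroup X] [Module ℝ X] [TopologicalSpace X]
    [IsTopologicalAddGroup X] [ContinuousSMul ℝ X] [T2Space X] [SeparatingDual ℝ X]
    [MeasurableSpace X] [BorelSpace X]

private lemma aux_ae_mem {ν : Measure X} {S : Set X} (hν : ν Sᶜ = 0) : ∀ᵐ x ∂ν, x ∈ S := by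
  rw [MeasureTheory.ae_iff]
  exact hν

private lemma aux_integrable {E : Type*} [NormedAddCommGroup E]
    [SecondCountableTopologyEither X E]
    {ν : Measure X} [IsFiniteMeasure ν] {S : Set X} (hS : IsCompact S) (hν : ν Sᶜ = 0)
    {g : X → E} (hg : Continuous g) : Integrable g ν := by
  rcases S.eq_empty_or_nonempty with rfl | hne
  · have h0 : ν = 0 := by
      have h1 : ν Set.univ = 0 := by simpa using hν
      exact Measure.measure_univ_eq_zero.mp h1
    simp [h0]
  · obtain ⟨x₀, _, hx₀⟩ := hS.exists_isMaxOn hne (hg.norm.continuousOn)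
    refine (integrable_const (‖g x₀‖)).mono' hg.aestronglyMeasurable ?_
    filter_upwards [aux_ae_mem hν] with x hx using hx₀ hx

private lemma aux_barycenter {Q S : Set X} (hQcomp : IsCompact Q) (hQconv : Convex ℝ Q)
    (hS : IsCompact S) (hSQ : S ⊆ Q) (ν : Measure X) [IsProbabilityMeasure ν]
    (hν : ν Sᶜ = 0) : ∃ b ∈ Q, ∀ f : X →L[ℝ] ℝ, f b = ∫ x, f x ∂ν := by
  classical
  have hνQ : ν Qᶜ = 0 := measure_mono_null (Set.compl_subset_compl.2 hSQ) hν
  set D : Finset (X →L[ℝ] ℝ) → Set X := fun F =>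
    Q ∩ ⋂ f ∈ F, {x | f x = ∫ y, f y ∂ν} with hD
  have hclosed : ∀ F, IsClosed (D F) := fun F =>
    hQcomp.isClosed.inter
      (isClosed_biInter fun f _ => isClosed_eq f.continuous continuous_const)
  have hcompact : ∀ F, IsCompact (D F) :=
    fun F => hQcomp.of_isClosed_subset (hclosed F) Set.inter_subset_left
  have hdir : Directed (· ⊇ ·) D := by
    intro F G
    exact ⟨F ∪ G, fun x hx => ⟨hx.1, Set.mem_iInter₂.mpr fun f hf =>
        Set.mem_iInter₂.mp hx.2 f (Finset.mem_union_left _ hf)⟩,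
      fun x hx => ⟨hx.1, Set.mem_iInter₂.mpr fun f hf =>
        Set.mem_iInter₂.mp hx.2 f (Finset.mem_union_right _ hf)⟩⟩
  have hne : ∀ F, (D F).Nonempty := by
    intro F
    set T : X →L[ℝ] (F → ℝ) := ContinuousLinearMap.pi (fun f : F => (f : X →L[ℝ] ℝ)) with hT
    have hTint : Integrable (fun x => T x) ν := aux_integrable hS hν T.continuous
    have hmem : (∫ x, T x ∂ν) ∈ T '' Q := by
      have hconv : Convex ℝ (T '' Q) := by
        have := hQconv.linear_image (T : X →ₗ[ℝ] (F → ℝ))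
        simpa using this
      have hcl : IsClosed (T '' Q) := (hQcomp.image T.continuous).isClosed
      refine hconv.integral_mem hcl ?_ hTint
      filter_upwards [aux_ae_mem hνQ] with x hx using Set.mem_image_of_mem _ hx
    obtain ⟨b, hbQ, hbT⟩ := hmem
    refine ⟨b, hbQ, Set.mem_iInter₂.mpr ?_⟩
    intro f hf
    have hcomm := (ContinuousLinearMap.proj (R := ℝ) (φ := fun _ : F => ℝ)
        (⟨f, hf⟩ : F)).integral_comp_comm hTint
    show f b = ∫ y, f y ∂ν
    calc f b = (T b) ⟨f, hf⟩ := rfl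
    _ = (∫ x, T x ∂ν) ⟨f, hf⟩ := by rw [hbT]
    _ = ∫ x, (ContinuousLinearMap.proj (R := ℝ) (φ := fun _ : F => ℝ)
        (⟨f, hf⟩ : F)) (T x) ∂ν := hcomm.symm
    _ = ∫ y, f y ∂ν := rfl
  obtain ⟨b, hb⟩ := IsCompact.nonempty_iInter_of_directed_nonempty_isCompact_isClosed
    D hdir hne hcompact hclosed
  simp only [Set.mem_iInter] at hb
  have hbQ : b ∈ Q := (hb ∅).1
  refine ⟨b, hbQ, fun f => ?_⟩
  exact Set.mem_iInter₂.mp (hb {f}).2 f (Finset.mem_singleton_self f)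

private lemma aux_strict {ν : Measure X} [IsProbabilityMeasure ν] {g : X → ℝ} {c : ℝ}
    (hint : Integrable g ν) (hae : ∀ᵐ x ∂ν, g x < c) : ∫ x, g x ∂ν ≠ c := by
  intro h
  have h1 : ∫ x, (c - g x) ∂ν = 0 := by
    rw [integral_sub (integrable_const c) hint, h, integral_const]
    simp
  have h2 : (fun x => c - g x) =ᵐ[ν] 0 :=
    (integral_eq_zero_iff_of_nonneg_ae (hae.mono fun x hx => by simp; linarith)
      ((integrable_const c).sub hint)).mp h1
  haveI : (ae ν).NeBot := ae_neBot.mpr (IsProbabilityMeasure.ne_zero ν)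
  obtain ⟨x, hx0, hxlt⟩ := (h2.and hae).exists
  simp only [Pi.zero_apply] at hx0
  linarith

private lemma aux_eq_dirac {ν : Measure X} [IsProbabilityMeasure ν] {z : X}
    (h : ν {z}ᶜ = 0) : ν = Measure.dirac z := by
  refine Measure.ext fun s hs => ?_
  rw [Measure.dirac_apply' _ hs]
  have hsplit : ν (s ∩ {z}) + ν (s \ {z}) = ν s := measure_inter_add_diff s (measurableSet_singleton z)
  have hdiff : ν (s \ {z}) = 0 := measure_mono_null (fun x hx => hx.2) h
  by_cases hzs : z ∈ s
  · have h1 : s ∩ {z} = {z} := by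
      ext x; simp only [Set.mem_inter_iff, Set.mem_singleton_iff]
      exact ⟨fun h => h.2, fun h => ⟨h ▸ hzs, h⟩⟩
    have hz1 : ν {z} = 1 := by
      have := measure_add_measure_compl (μ := ν) (measurableSet_singleton z)
      rw [h, measure_univ, add_zero] at this
      exact this
    rw [← hsplit, h1, hz1, hdiff, Set.indicator_of_mem hzs]
    simp
  · have h1 : s ∩ {z} = ∅ := by
      rw [Set.eq_empty_iff_forall_notMem]
      rintro x ⟨hxs, rfl⟩; exact hzs hxs
    rw [← hsplit, h1, hdiff, Set.indicator_of_notMem hzs]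
    simp

private lemma aux_measure_apply (x y : X) (c d : ℝ≥0∞) {s : Set X} (hs : MeasurableSet s) :
    (c • Measure.dirac x + d • Measure.dirac y) s =
      (if x ∈ s then c else 0) + (if y ∈ s then d else 0) := by
  rw [Measure.add_apply, Measure.smul_apply, Measure.smul_apply,
    Measure.dirac_apply' _ hs, Measure.dirac_apply' _ hs]
  simp [Set.indicator_apply, mul_ite]

private lemma aux_regular (x y : X) (c d : ℝ≥0∞) (hc : c ≠ ⊤) (hd : d ≠ ⊤) :
    (c • Measure.dirac x + d • Measure.dirac y).Regular := by
  set μ := c • Measure.dirac x + d • Measure.dirac y with hμ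
  have hm : ∀ s : Set X, MeasurableSet s →
      μ s = (if x ∈ s then c else 0) + (if y ∈ s then d else 0) :=
    fun s hs => aux_measure_apply x y c d hs
  haveI : IsFiniteMeasure μ := by
    constructor
    rw [hm Set.univ MeasurableSet.univ]
    simp [lt_top_iff_ne_top, hc, hd]
  haveI : Measure.OuterRegular μ := by
    refine ⟨fun A hA r hr => ?_⟩
    rw [hm A hA] at hr
    by_cases hx : x ∈ A <;> by_cases hy : y ∈ A
    · refine ⟨Set.univ, Set.subset_univ A, isOpen_univ, ?_⟩
      rw [hm Set.univ MeasurableSet.univ]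
      rw [if_pos hx, if_pos hy] at hr
      simpa using hr
    · have hxy : x ≠ y := fun h => hy (h ▸ hx)
      refine ⟨{y}ᶜ, fun a ha h => hy (h ▸ ha), isOpen_compl_singleton, ?_⟩
      rw [hm {y}ᶜ (measurableSet_singleton y).compl,
        if_pos (by simpa using hxy), if_neg (by simp)]
      rw [if_pos hx, if_neg hy] at hr
      simpa using hr
    · have hxy : y ≠ x := fun h => hx (h ▸ hy)
      refine ⟨{x}ᶜ, fun a ha h => hx (h ▸ ha), isOpen_compl_singleton, ?_⟩
      rw [hm {x}ᶜ (measurableSet_singleton x).compl,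
        if_neg (by simp), if_pos (by simpa using hxy)]
      rw [if_neg hx, if_pos hy] at hr
      simpa using hr
    · refine ⟨{x}ᶜ ∩ {y}ᶜ, fun a ha => ⟨fun h => hx (h ▸ ha), fun h => hy (h ▸ ha)⟩,
        isOpen_compl_singleton.inter isOpen_compl_singleton, ?_⟩
      rw [hm ({x}ᶜ ∩ {y}ᶜ)
        ((measurableSet_singleton x).compl.inter (measurableSet_singleton y).compl),
        if_neg (by simp), if_neg (by simp)]
      rw [if_neg hx, if_neg hy] at hr
      simpa using hr
  refine ⟨fun U hU r hr => ?_⟩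
  refine ⟨U ∩ {x, y}, Set.inter_subset_left, (Set.toFinite (U ∩ {x, y})).isCompact, ?_⟩
  have hmeas : MeasurableSet (U ∩ {x, y}) :=
    hU.measurableSet.inter (Set.Finite.measurableSet (Set.toFinite _))
  rw [hm (U ∩ {x, y}) hmeas]
  rw [hm U hU.measurableSet] at hr
  have hxiff : (x ∈ U ∩ ({x, y} : Set X)) ↔ x ∈ U := by simp
  have hyiff : (y ∈ U ∩ ({x, y} : Set X)) ↔ y ∈ U := by simp
  simp only [hxiff, hyiff]
  exact hr

end Aux

/-- Let `Q` be a CCS (a nonempty compact convex subset of a real topological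
vector space whose continuous dual separates points).  A point `z ∈ Q` is an extreme point of
`Q` if and only if the only regular Borel probability measure `ν` on `Q` having `z` as a
barycenter is the Dirac measure `δ_z`. -/
theorem stmt_1 {X : Type*}
    [AddCommGroup X] [Module ℝ X] [TopologicalSpace X]
    [IsTopologicalAddGroup X] [ContinuousSMul ℝ X] [T2Space X] [SeparatingDual ℝ X]
    [MeasurableSpace X] [BorelSpace X]
    (Q : Set X) (hQne : Q.Nonempty) (hQcomp : IsCompact Q) (hQconv : Convex ℝ Q)
    (z : X) (hz : z ∈ Q) :
    z ∈ Q.extremePoints ℝ ↔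
      ∀ ν : Measure X, IsProbabilityMeasure ν → ν.Regular → ν Q = 1 →
        (∀ f : X →L[ℝ] ℝ, f z = ∫ x, f x ∂ν) → ν = Measure.dirac z := by
  have hQmeas : MeasurableSet Q := hQcomp.isClosed.measurableSet
  constructor
  · -- forward direction
    intro hext ν hprob hreg hQ1 hbar
    by_contra hne
    have hνQc : ν Qᶜ = 0 := by
      rw [measure_compl hQmeas (measure_ne_top ν Q), measure_univ, hQ1, tsub_self]
    have hzc : (0 : ℝ≥0∞) < ν {z}ᶜ := by
      rcases eq_or_ne (ν {z}ᶜ) 0 with h | h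
      · exact absurd (aux_eq_dirac h) hne
      · exact pos_iff_ne_zero.mpr h
    obtain ⟨K, hKsub, hKcomp, hKpos⟩ :=
      hreg.innerRegular isOpen_compl_singleton 0 hzc
    set K' : Set X := K ∩ Q with hK'def
    have hK'comp : IsCompact K' := hKcomp.inter_right hQcomp.isClosed
    have hK'Q : K' ⊆ Q := Set.inter_subset_right
    have hK'pos : 0 < ν K' := by
      have hK : ν K ≤ ν K' + ν Qᶜ := by
        refine le_trans (measure_mono fun w hw => ?_) (measure_union_le _ _)
        by_cases hwQ : w ∈ Q
        · exact Or.inl ⟨hw, hwQ⟩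
        · exact Or.inr hwQ
      rw [hνQc, add_zero] at hK
      exact lt_of_lt_of_le hKpos hK
    set U : (X →L[ℝ] ℝ) → Set X := fun f => {w | f w < f z} with hUdef
    have hUopen : ∀ f : X →L[ℝ] ℝ, IsOpen (U f) := fun f =>
      isOpen_lt f.continuous continuous_const
    have hcov : K' ⊆ ⋃ f : X →L[ℝ] ℝ, U f := by
      intro x hx
      have hxz : x ≠ z := by
        intro h
        exact (hKsub hx.1) (by simp [h])
      obtain ⟨f, hf⟩ := SeparatingDual.exists_separating_of_ne (R := ℝ) hxz
      rcases lt_or_gt_of_ne hf with h | h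
      · exact Set.mem_iUnion.mpr ⟨f, h⟩
      · refine Set.mem_iUnion.mpr ⟨-f, ?_⟩
        show -f x < -f z
        simp only [ContinuousLinearMap.neg_apply, neg_lt_neg_iff]
        exact h
    obtain ⟨t, ht⟩ := hK'comp.elim_finite_subcover U hUopen hcov
    have hex : ∃ g ∈ t, 0 < ν (K' ∩ U g) := by
      by_contra hcon
      push_neg at hcon
      have hsum : ν K' ≤ ∑ g ∈ t, ν (K' ∩ U g) := by
        refine le_trans (measure_mono ?_) (measure_biUnion_finset_le t _)
        intro x hx
        obtain ⟨g, hg1, hg2⟩ := Set.mem_iUnion₂.mp (ht hx)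
        exact Set.mem_iUnion₂.mpr ⟨g, hg1, hx, hg2⟩
      have hzero : ∑ g ∈ t, ν (K' ∩ U g) = 0 :=
        Finset.sum_eq_zero fun g hg => le_antisymm (hcon g hg) (by simp)
      rw [hzero] at hsum
      exact absurd (le_antisymm hsum (by simp)) (ne_of_gt hK'pos)
    obtain ⟨g, -, hApos⟩ := hex
    set A : Set X := K' ∩ U g with hAdef
    have hAmeas : MeasurableSet A :=
      hK'comp.isClosed.measurableSet.inter (hUopen g).measurableSet
    have hAK' : A ⊆ K' := Set.inter_subset_left
    have hAU : A ⊆ U g := Set.inter_subset_right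
    have hintg : Integrable (fun x => g x) ν := aux_integrable hQcomp hνQc g.continuous
    have hA1 : ν A ≤ 1 := prob_le_one
    rcases eq_or_lt_of_le hA1 with hAeq | hAlt
    · have hAc : ν Aᶜ = 0 := by
        rw [measure_compl hAmeas (measure_ne_top ν A), measure_univ, hAeq, tsub_self]
      have hae : ∀ᵐ x ∂ν, g x < g z :=
        (aux_ae_mem hAc).mono fun x hx => hAU hx
      exact aux_strict hintg hae (hbar g).symm
    · set ν₁ : Measure X := (ν A)⁻¹ • ν.restrict A with hν₁def
      set ν₂ : Measure X := (ν Aᶜ)⁻¹ • ν.restrict Aᶜ with hν₂def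
      have hνAne0 : ν A ≠ 0 := ne_of_gt hApos
      have hνAnetop : ν A ≠ ⊤ := measure_ne_top ν A
      have hAc : ν Aᶜ = 1 - ν A := by
        rw [measure_compl hAmeas (measure_ne_top ν A), measure_univ]
      have hνAcne0 : ν Aᶜ ≠ 0 := by
        rw [hAc]
        simpa [tsub_eq_zero_iff_le] using not_le.mpr hAlt
      have hνAcnetop : ν Aᶜ ≠ ⊤ := measure_ne_top ν Aᶜ
      haveI hprob₁ : IsProbabilityMeasure ν₁ := by
        constructor
        rw [hν₁def, Measure.smul_apply, Measure.restrict_apply_univ, smul_eq_mul]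
        exact ENNReal.inv_mul_cancel hνAne0 hνAnetop
      haveI hprob₂ : IsProbabilityMeasure ν₂ := by
        constructor
        rw [hν₂def, Measure.smul_apply, Measure.restrict_apply_univ, smul_eq_mul]
        exact ENNReal.inv_mul_cancel hνAcne0 hνAcnetop
      have hν₁Ac : ν₁ Aᶜ = 0 := by
        rw [hν₁def, Measure.smul_apply, Measure.restrict_apply hAmeas.compl]
        simp
      have hν₁K'c : ν₁ K'ᶜ = 0 :=
        measure_mono_null (Set.compl_subset_compl.2 hAK') hν₁Ac
      have hν₂Qc : ν₂ Qᶜ = 0 := by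
        rw [hν₂def, Measure.smul_apply, Measure.restrict_apply hQmeas.compl]
        exact mul_eq_zero.mpr (Or.inr (measure_mono_null Set.inter_subset_left hνQc))
      obtain ⟨b₁, hb₁Q, hb₁⟩ := aux_barycenter hQcomp hQconv hK'comp hK'Q ν₁ hν₁K'c
      obtain ⟨b₂, hb₂Q, hb₂⟩ :=
        aux_barycenter hQcomp hQconv hQcomp (subset_refl Q) ν₂ hν₂Qc
      set p : ℝ := (ν A).toReal with hpdef
      have hp0 : 0 < p := ENNReal.toReal_pos hνAne0 hνAnetop
      have hp1 : p < 1 := by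
        have := (ENNReal.toReal_lt_toReal hνAnetop (by simp : (1:ℝ≥0∞) ≠ ⊤)).mpr hAlt
        simpa using this
      have hcomb : ∀ f : X →L[ℝ] ℝ, f z = p * f b₁ + (1 - p) * f b₂ := by
        intro f
        have hint : Integrable (fun x => f x) ν := aux_integrable hQcomp hνQc f.continuous
        have h1 : f b₁ = ((ν A)⁻¹).toReal * ∫ x in A, f x ∂ν := by
          rw [hb₁ f, hν₁def, integral_smul_measure]; rfl
        have h2 : f b₂ = ((ν Aᶜ)⁻¹).toReal * ∫ x in Aᶜ, f x ∂ν := by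
          rw [hb₂ f, hν₂def, integral_smul_measure]; rfl
        have hAc' : (ν Aᶜ).toReal = 1 - p := by
          rw [hAc, ENNReal.toReal_sub_of_le hA1 (by simp)]
          simp [hpdef]
        rw [h1, h2, ENNReal.toReal_inv, ENNReal.toReal_inv, hAc', ← hpdef]
        have hsplit := integral_add_compl hAmeas hint
        rw [hbar f, ← hsplit]
        have h1p : (1:ℝ) - p ≠ 0 := by linarith
        field_simp
      have hzeq : p • b₁ + (1 - p) • b₂ = z := by
        by_contra hne'
        obtain ⟨f, hf⟩ := SeparatingDual.exists_separating_of_ne (R := ℝ) hne'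
        apply hf
        rw [f.map_add, f.map_smul, f.map_smul, smul_eq_mul, smul_eq_mul, ← hcomb f]
      have hb₁z : b₁ = z :=
        ((mem_extremePoints.mp hext).2 b₁ hb₁Q b₂ hb₂Q
          ⟨p, 1 - p, hp0, by linarith, by ring, hzeq⟩).1
      have hintg₁ : Integrable (fun x => g x) ν₁ :=
        aux_integrable hK'comp hν₁K'c g.continuous
      have hae₁ : ∀ᵐ x ∂ν₁, g x < g z :=
        (aux_ae_mem hν₁Ac).mono fun x hx => hAU hx
      exact aux_strict hintg₁ hae₁ ((hb₁ g).symm.trans (by rw [hb₁z]))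
  · -- reverse direction
    intro h
    rw [mem_extremePoints]
    refine ⟨hz, ?_⟩
    rintro x₁ hx₁ x₂ hx₂ ⟨a, b, ha, hb, hab, hsum⟩
    set ν : Measure X :=
      ENNReal.ofReal a • Measure.dirac x₁ + ENNReal.ofReal b • Measure.dirac x₂ with hνdef
    have happ := fun s hs =>
      aux_measure_apply x₁ x₂ (ENNReal.ofReal a) (ENNReal.ofReal b) (s := s) hs
    have hprob : IsProbabilityMeasure ν := by
      constructor
      rw [happ Set.univ MeasurableSet.univ]
      simp [← ENNReal.ofReal_add, ha.le, hb.le, hab]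
    have hreg : ν.Regular := aux_regular x₁ x₂ _ _ ENNReal.ofReal_ne_top ENNReal.ofReal_ne_top
    have hQ1 : ν Q = 1 := by
      rw [happ Q hQmeas, if_pos hx₁, if_pos hx₂, ← ENNReal.ofReal_add ha.le hb.le, hab,
        ENNReal.ofReal_one]
    have hbar : ∀ f : X →L[ℝ] ℝ, f z = ∫ x, f x ∂ν := by
      intro f
      have hi1 : Integrable (fun x => f x) (Measure.dirac x₁) :=
        aux_integrable (S := {x₁}) isCompact_singleton
          (by rw [Measure.dirac_apply' _ (measurableSet_singleton x₁).compl]; simp) f.continuous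
      have hi2 : Integrable (fun x => f x) (Measure.dirac x₂) :=
        aux_integrable (S := {x₂}) isCompact_singleton
          (by rw [Measure.dirac_apply' _ (measurableSet_singleton x₂).compl]; simp) f.continuous
      have hI : ∫ x, f x ∂ν = a * f x₁ + b * f x₂ := by
        rw [hνdef, integral_add_measure (hi1.smul_measure ENNReal.ofReal_ne_top)
          (hi2.smul_measure ENNReal.ofReal_ne_top), integral_smul_measure,
          integral_smul_measure, integral_dirac, integral_dirac,
          ENNReal.toReal_ofReal ha.le, ENNReal.toReal_ofReal hb.le, smul_eq_mul, smul_eq_mul]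
      rw [hI, ← hsum, f.map_add, f.map_smul, f.map_smul, smul_eq_mul, smul_eq_mul]
    have hδ := h ν hprob hreg hQ1 hbar
    constructor
    · by_contra hne
      have heval := congrArg (fun m : Measure X => m {x₁}) hδ
      rw [happ {x₁} (measurableSet_singleton x₁),
        Measure.dirac_apply' _ (measurableSet_singleton x₁), if_pos (Set.mem_singleton x₁)] at heval
      have hz1 : ({x₁} : Set X).indicator (1 : X → ℝ≥0∞) z = 0 :=
        Set.indicator_of_notMem
          (by simp only [Set.mem_singleton_iff]; exact fun hh => hne hh.symm) _
      rw [hz1] at heval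
      have hpos : (0:ℝ≥0∞) <
          ENNReal.ofReal a + (if x₂ ∈ ({x₁} : Set X) then ENNReal.ofReal b else 0) :=
        lt_of_lt_of_le (ENNReal.ofReal_pos.mpr ha) le_self_add
      exact (ne_of_gt hpos) (by convert heval)
    · by_contra hne
      have heval := congrArg (fun m : Measure X => m {x₂}) hδ
      rw [happ {x₂} (measurableSet_singleton x₂),
        Measure.dirac_apply' _ (measurableSet_singleton x₂), if_pos (Set.mem_singleton x₂)] at heval
      have hz1 : ({x₂} : Set X).indicator (1 : X → ℝ≥0∞) z = 0 :=
        Set.indicator_of_notMem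
          (by simp only [Set.mem_singleton_iff]; exact fun hh => hne hh.symm) _
      rw [hz1] at heval
      have hpos : (0:ℝ≥0∞) <
          (if x₁ ∈ ({x₂} : Set X) then ENNReal.ofReal a else 0) + ENNReal.ofReal b :=
        lt_of_lt_of_le (ENNReal.ofReal_pos.mpr hb) le_add_self
      exact (ne_of_gt hpos) (by convert heval)
end

section
/- An affine representation (G,Q) of a topological group G is irreducible if and only if for every x ∈ Q the closure of the orbit Gx contains the closure of the set of extreme points of Q. -/
open Set Filter Topology

section JoinCompact
variable {E : Type*} [AddCommGroup E] [Module ℝ E] [TopologicalSpace E]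
  [IsTopologicalAddGroup E] [ContinuousSMul ℝ E]

lemma aux_isCompact_convexJoin {A B : Set E} (hA : IsCompact A) (hB : IsCompact B) :
    IsCompact (convexJoin ℝ A B) := by
  have heq : convexJoin ℝ A B =
      (fun p : ℝ × E × E => p.1 • p.2.1 + (1 - p.1) • p.2.2) '' (Icc (0:ℝ) 1 ×ˢ A ×ˢ B) := by
    ext z
    simp only [mem_convexJoin, mem_image, mem_prod, mem_Icc, Prod.exists]
    constructor
    · rintro ⟨x, hx, y, hy, a, b, ha, hb, hab, rfl⟩
      exact ⟨a, x, y, ⟨⟨ha, by linarith⟩, hx, hy⟩, by rw [show 1 - a = b by linarith]⟩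
    · rintro ⟨a, x, y, ⟨⟨ha0, ha1⟩, hx, hy⟩, rfl⟩
      exact ⟨x, hx, y, hy, a, 1 - a, ha0, by linarith, by ring, rfl⟩
  rw [heq]
  exact ((isCompact_Icc).prod (hA.prod hB)).image (by fun_prop)

lemma aux_isCompact_convexHull_biUnion {ι : Type*} (K : ι → Set E) (t : Finset ι)
    (hne : t.Nonempty) (hcomp : ∀ i ∈ t, IsCompact (K i)) (hconv : ∀ i ∈ t, Convex ℝ (K i))
    (hnon : ∀ i ∈ t, (K i).Nonempty) :
    IsCompact (convexHull ℝ (⋃ i ∈ t, K i)) := by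
  classical
  induction t using Finset.induction_on with
  | empty => exact absurd hne (by simp)
  | @insert a s ha ih =>
    rcases s.eq_empty_or_nonempty with rfl | hs
    · have h1 : (⋃ i ∈ insert a (∅:Finset ι), K i) = K a := by simp
      rw [h1, (hconv a (by simp)).convexHull_eq]
      exact hcomp a (by simp)
    · have ihc := ih hs (fun i hi => hcomp i (Finset.mem_insert_of_mem hi))
        (fun i hi => hconv i (Finset.mem_insert_of_mem hi))
        (fun i hi => hnon i (Finset.mem_insert_of_mem hi))
      have hMne : (convexHull ℝ (⋃ i ∈ s, K i)).Nonempty := by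
        obtain ⟨i, hi⟩ := hs
        obtain ⟨y, hy⟩ := hnon i (Finset.mem_insert_of_mem hi)
        exact ⟨y, subset_convexHull ℝ _ (mem_biUnion hi hy)⟩
      rw [Finset.set_biUnion_insert, ← convexHull_convexHull_union_right,
        Convex.convexHull_union (hconv a (Finset.mem_insert_self a s))
          (convex_convexHull ℝ _) (hnon a (Finset.mem_insert_self a s)) hMne]
      exact aux_isCompact_convexJoin (hcomp a (Finset.mem_insert_self a s)) ihc

end JoinCompact

section Milman
variable {E : Type*} [AddCommGroup E] [Module ℝ E] [TopologicalSpace E]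
  [IsTopologicalAddGroup E] [ContinuousSMul ℝ E] [LocallyConvexSpace ℝ E] [T2Space E]

/-- **Milman's theorem** in a locally convex Hausdorff TVS. -/
lemma aux_milman {Q S : Set E} (hQcomp : IsCompact Q) (hQconv : Convex ℝ Q)
    (hSQ : S ⊆ Q) (hQS : Q ⊆ closure (convexHull ℝ S)) :
    Q.extremePoints ℝ ⊆ closure S := by
  intro x hx
  have hxQ : x ∈ Q := extremePoints_subset hx
  have hTQ : closure S ⊆ Q := closure_minimal hSQ hQcomp.isClosed
  have hTcomp : IsCompact (closure S) := hQcomp.of_isClosed_subset isClosed_closure hTQ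
  have hSne : S.Nonempty := by
    rcases S.eq_empty_or_nonempty with rfl | h
    · simp only [convexHull_empty, closure_empty] at hQS
      exact absurd (hQS hxQ) (notMem_empty x)
    · exact h
  rw [← closure_closure (s := S)]
  rw [mem_closure_iff]
  intro N hNopen hxN
  have hU : (fun u => x - u) ⁻¹' N ∈ 𝓝 (0:E) := by
    have : ContinuousAt (fun u : E => x - u) 0 := (continuous_const.sub continuous_id).continuousAt
    apply this.preimage_mem_nhds
    simpa using hNopen.mem_nhds hxN
  obtain ⟨D, hDmem, hDclosed, hDU⟩ := exists_mem_nhds_isClosed_subset hU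
  obtain ⟨V, ⟨hVmem, hVconv⟩, hVD⟩ :=
    (LocallyConvexSpace.convex_basis_zero ℝ E).mem_iff.mp hDmem
  have hcov : ∀ s ∈ closure S, (· - s) ⁻¹' V ∈ 𝓝 s := by
    intro s _
    have : ContinuousAt (fun u : E => u - s) s := (continuous_id.sub continuous_const).continuousAt
    apply this.preimage_mem_nhds
    simpa using hVmem
  obtain ⟨t, htT, hcover⟩ := hTcomp.elim_nhds_subcover _ hcov
  set K : E → Set E := fun i => closure (convexHull ℝ (closure S ∩ (· - i) ⁻¹' V)) with hK
  have hKQ : ∀ i, K i ⊆ Q :=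
    fun i => closure_minimal (convexHull_min ((inter_subset_left).trans hTQ) hQconv)
      hQcomp.isClosed
  have hKcomp : ∀ i, IsCompact (K i) :=
    fun i => hQcomp.of_isClosed_subset isClosed_closure (hKQ i)
  have hKconv : ∀ i, Convex ℝ (K i) := fun i => (convex_convexHull ℝ _).closure
  have hKnon : ∀ i ∈ t, (K i).Nonempty := by
    intro i hi
    refine ⟨i, subset_closure (subset_convexHull ℝ _ ⟨htT i hi, ?_⟩)⟩
    simpa using mem_of_mem_nhds hVmem
  have htne : t.Nonempty := by
    obtain ⟨s, hs⟩ := hSne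
    obtain ⟨i, hi, -⟩ := mem_iUnion₂.mp (hcover (subset_closure hs))
    exact ⟨i, hi⟩
  set M : Set E := convexHull ℝ (⋃ i ∈ t, K i) with hM
  have hMcomp : IsCompact M :=
    aux_isCompact_convexHull_biUnion K t htne (fun i _ => hKcomp i) (fun i _ => hKconv i) hKnon
  have hMQ : M ⊆ Q := convexHull_min (iUnion₂_subset fun i _ => hKQ i) hQconv
  have hSM : S ⊆ M := by
    intro s hs
    obtain ⟨i, hi, hsi⟩ := mem_iUnion₂.mp (hcover (subset_closure hs))
    exact subset_convexHull ℝ _ (mem_biUnion hi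
      (subset_closure (subset_convexHull ℝ _ ⟨subset_closure hs, hsi⟩)))
  have hQM : Q ⊆ M :=
    hQS.trans (closure_minimal (convexHull_min hSM (convex_convexHull ℝ _)) hMcomp.isClosed)
  have hQeq : Q = M := Subset.antisymm hQM hMQ
  rw [hQeq] at hx
  obtain ⟨i, hi, hxK⟩ := mem_iUnion₂.mp (extremePoints_convexHull_subset hx)
  have hVpre : Convex ℝ ((· - i) ⁻¹' V) := by
    have := hVconv.translate_preimage_right (-i)
    convert this using 2 with u
    · ext u; simp [sub_eq_neg_add]
  have hxV : x - i ∈ closure V := by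
    have h1 : K i ⊆ closure ((· - i) ⁻¹' V) :=
      closure_mono (convexHull_min inter_subset_right hVpre)
    have h2 : closure ((· - i) ⁻¹' V) = (· - i) ⁻¹' closure V :=
      ((Homeomorph.subRight i).preimage_closure V).symm
    have := h1 hxK
    rwa [h2] at this
  have hmem : x - i ∈ (fun u => x - u) ⁻¹' N := hDU (closure_minimal hVD hDclosed hxV)
  have hiN : i ∈ N := by simpa using hmem
  exact ⟨i, hiN, htT i hi⟩

end Milman

lemma aux_weak_t2 {X : Type*} [AddCommGroup X] [Module ℝ X] [TopologicalSpace X]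
    [IsTopologicalAddGroup X] [ContinuousSMul ℝ X] [SeparatingDual ℝ X] :
    T2Space (WeakSpace ℝ X) := by
  refine (WeakBilin.isEmbedding ?_).t2Space
  intro a b hab
  by_contra hne
  obtain ⟨f, hf⟩ := SeparatingDual.exists_separating_of_ne (R := ℝ) hne
  have := LinearMap.congr_fun hab f
  simp only [topDualPairing, LinearMap.flip_apply] at this
  exact hf (by simpa using this)

/-- An affine representation `(G,Q)` of a topological group `G` is
irreducible if and only if for every `x ∈ Q` the closure of the orbit `Gx` contains the
closure of the set of extreme points of `Q`. -/
theorem stmt_2 {G X : Type*} [Group G] [TopologicalSpace G] [IsTopologicalGroup G]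
    [AddCommGroup X] [Module ℝ X] [TopologicalSpace X]
    [IsTopologicalAddGroup X] [ContinuousSMul ℝ X] [T2Space X] [SeparatingDual ℝ X]
    (Q : Set X) (hQne : Q.Nonempty) (hQcomp : IsCompact Q) (hQconv : Convex ℝ Q)
    (ρ : G → X → X)
    (hmaps : ∀ g : G, MapsTo (ρ g) Q Q)
    (hcont : ContinuousOn (fun p : G × X => ρ p.1 p.2) (univ ×ˢ Q))
    (hone : ∀ x ∈ Q, ρ 1 x = x)
    (hmul : ∀ g h : G, ∀ x ∈ Q, ρ (g * h) x = ρ g (ρ h x))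
    (haff : ∀ g : G, ∀ x₁ ∈ Q, ∀ x₂ ∈ Q, ∀ t : ℝ, 0 ≤ t → t ≤ 1 →
      ρ g (t • x₁ + (1 - t) • x₂) = t • ρ g x₁ + (1 - t) • ρ g x₂) :
    (∀ C : Set X, C ⊆ Q → C.Nonempty → IsClosed C → Convex ℝ C →
        (∀ g : G, MapsTo (ρ g) C C) → C = Q) ↔
      ∀ x ∈ Q, closure (Q.extremePoints ℝ) ⊆ closure {y | ∃ g : G, y = ρ g x} := by
  haveI : ContinuousSMul ℝ (WeakSpace ℝ X) :=
    inferInstanceAs (ContinuousSMul ℝ (WeakBilin (topDualPairing ℝ X).flip))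
  haveI : LocallyConvexSpace ℝ (WeakSpace ℝ X) :=
    inferInstanceAs (LocallyConvexSpace ℝ (WeakBilin (topDualPairing ℝ X).flip))
  haveI : T2Space (WeakSpace ℝ X) := aux_weak_t2
  set j : X →L[ℝ] WeakSpace ℝ X := toWeakSpaceCLM ℝ X with hj
  have hjcont : Continuous j := map_continuous j
  have hjinj : Function.Injective j := (toWeakSpaceCLM_bijective (𝕜 := ℝ) (E := X)).injective
  have hext : ∀ S : Set X, j '' (S.extremePoints ℝ) = extremePoints ℝ (j '' S) := by
    intro S
    have hco : ⇑(toWeakSpace ℝ X) = ⇑j := by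
      funext x; exact (toWeakSpaceCLM_eq_toWeakSpace ℝ X x).symm
    have h := image_extremePoints (toWeakSpace ℝ X) S
    rwa [hco] at h
  have hconvim : ∀ S : Set X, j '' convexHull ℝ S = convexHull ℝ (j '' S) := by
    intro S
    simpa using (j : X →ₗ[ℝ] WeakSpace ℝ X).image_convexHull S
  have keyclosure : ∀ S : Set X, S ⊆ Q → j '' closure S = closure (j '' S) := by
    intro S hS
    refine Subset.antisymm (image_closure_subset_closure_image hjcont) ?_
    have hc : IsCompact (j '' closure S) :=
      (hQcomp.of_isClosed_subset isClosed_closure (closure_minimal hS hQcomp.isClosed)).image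
        hjcont
    exact closure_minimal (image_mono subset_closure) hc.isClosed
  have hQ'comp : IsCompact (j '' Q) := hQcomp.image hjcont
  have hQ'conv : Convex ℝ (j '' Q) := hQconv.linear_image (j : X →ₗ[ℝ] WeakSpace ℝ X)
  -- Krein-Milman in X
  have hKM : closure (convexHull ℝ (Q.extremePoints ℝ)) = Q := by
    have h1 := closure_convexHull_extremePoints hQ'comp hQ'conv
    rw [← hext, ← hconvim,
      ← keyclosure _ (convexHull_min extremePoints_subset hQconv)] at h1
    exact (Set.image_injective.mpr hjinj) h1
  -- Milman in X
  have hMIL : ∀ S : Set X, S ⊆ Q → Q ⊆ closure (convexHull ℝ S) →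
      Q.extremePoints ℝ ⊆ closure S := by
    intro S hSQ hQsub
    have hsub : j '' Q ⊆ closure (convexHull ℝ (j '' S)) := by
      rw [← hconvim, ← keyclosure _ (convexHull_min hSQ hQconv)]
      exact image_mono hQsub
    have h := aux_milman hQ'comp hQ'conv (image_mono hSQ) hsub
    rw [← hext, ← keyclosure _ hSQ] at h
    exact (Set.image_subset_image_iff hjinj).mp h
  constructor
  · intro hirr x hxQ
    set Orb := {y | ∃ g : G, y = ρ g x} with hOrb
    have hOrbQ : Orb ⊆ Q := by rintro y ⟨g, rfl⟩; exact hmaps g hxQ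
    have hxOrb : x ∈ Orb := ⟨1, (hone x hxQ).symm⟩
    have hcontg : ∀ g : G, ContinuousOn (ρ g) Q := by
      intro g
      have h1 : ContinuousOn (fun y : X => ((g, y) : G × X)) Q :=
        (continuous_const.prodMk continuous_id).continuousOn
      exact hcont.comp h1 (fun y hy => mem_prod.mpr ⟨mem_univ g, hy⟩)
    have hinv : ∀ g, MapsTo (ρ g) Orb Orb := by
      rintro g y ⟨h, rfl⟩; exact ⟨g * h, (hmul g h x hxQ).symm⟩
    have hhullQ : convexHull ℝ Orb ⊆ Q := convexHull_min hOrbQ hQconv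
    have hinvhull : ∀ g, MapsTo (ρ g) (convexHull ℝ Orb) (convexHull ℝ Orb) := by
      intro g
      have hT : convexHull ℝ Orb ⊆ {y | y ∈ Q ∧ ρ g y ∈ convexHull ℝ Orb} := by
        apply convexHull_min
        · intro y hy; exact ⟨hOrbQ hy, subset_convexHull ℝ _ (hinv g hy)⟩
        · rintro y₁ ⟨hy₁Q, hy₁⟩ y₂ ⟨hy₂Q, hy₂⟩ a b ha hb hab
          refine ⟨hQconv hy₁Q hy₂Q ha hb hab, ?_⟩
          have heq := haff g y₁ hy₁Q y₂ hy₂Q a ha (by linarith)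
          rw [show (1:ℝ) - a = b by linarith] at heq
          rw [heq]
          exact (convex_convexHull ℝ _) hy₁ hy₂ ha hb hab
      exact fun y hy => (hT hy).2
    set C := closure (convexHull ℝ Orb) with hC
    have hCQ : C ⊆ Q := closure_minimal hhullQ hQcomp.isClosed
    have hCinv : ∀ g, MapsTo (ρ g) C C := by
      intro g y hy
      have h1 : ρ g '' C ⊆ closure (ρ g '' convexHull ℝ Orb) :=
        ((hcontg g).mono hCQ).image_closure
      exact closure_mono (hinvhull g).image_subset (h1 (mem_image_of_mem _ hy))
    have hCeq : C = Q := hirr C hCQ ⟨x, subset_closure (subset_convexHull ℝ _ hxOrb)⟩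
      isClosed_closure ((convex_convexHull ℝ _).closure) hCinv
    have hQsub : Q ⊆ closure (convexHull ℝ Orb) := hCeq ▸ Subset.rfl
    exact closure_minimal (hMIL Orb hOrbQ hQsub) isClosed_closure
  · intro hdense C hCQ hCne hCclosed hCconv hCinv
    obtain ⟨x, hxC⟩ := hCne
    have hxQ := hCQ hxC
    have hOrbC : {y | ∃ g : G, y = ρ g x} ⊆ C := by
      rintro y ⟨g, rfl⟩; exact hCinv g hxC
    have hEC : Q.extremePoints ℝ ⊆ C :=
      (subset_closure.trans (hdense x hxQ)).trans (closure_minimal hOrbC hCclosed)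
    refine Subset.antisymm hCQ ?_
    calc Q = closure (convexHull ℝ (Q.extremePoints ℝ)) := hKM.symm
      _ ⊆ C := closure_minimal (convexHull_min hEC hCconv) hCclosed
end

section
/- Let a topological group G act continuously and strongly proximally on a compact Hausdorff space X. Then for any points x₁, …, xₙ ∈ X, the closure of the G-orbit of the tuple (x₁, …, xₙ) in Xⁿ under the diagonal action contains the diagonal Δ(Xⁿ) = {(x, …, x) : x ∈ X}. -/
open MeasureTheory

/-- A continuous action of `G` on a compact Hausdorff space `X` is strongly proximal if for
every regular Borel probability measure `ν` on `X` and every `x ∈ X` the Dirac measure `δ_x`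
lies in the weak-* closure of the pushforward orbit `{g_*ν : g ∈ G}`. -/
def StronglyProximalSMul (G : Type*) (X : Type*) [SMul G X]
    [TopologicalSpace X] [MeasurableSpace X] [OpensMeasurableSpace X] : Prop :=
  ∀ ν : ProbabilityMeasure X, (ν : Measure X).Regular → ∀ x : X,
    (⟨Measure.dirac x, inferInstance⟩ : ProbabilityMeasure X) ∈
      closure {μ : ProbabilityMeasure X | ∃ g : G,
        (μ : Measure X) = (ν : Measure X).map (fun z => g • z)}

open scoped NNReal ENNReal BigOperators

/-- A finite sum of Dirac measures evaluates sets by counting atoms. -/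
lemma sum_dirac_apply {X : Type*} [MeasurableSpace X] [MeasurableSingletonClass X]
    {n : ℕ} (x : Fin n → X) (B : Set X) :
    (∑ i : Fin n, Measure.dirac (x i)) B = ∑ i : Fin n, B.indicator 1 (x i) := by
  rw [Measure.finset_sum_apply]
  simp [Measure.dirac_apply]

/-- A finite sum of Dirac measures on a T1 space is regular. -/
lemma regular_sum_dirac {X : Type*} [TopologicalSpace X] [T1Space X]
    [MeasurableSpace X] [OpensMeasurableSpace X] {n : ℕ} (x : Fin n → X) :
    (∑ i : Fin n, Measure.dirac (x i)).Regular := by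
  set μs : Measure X := ∑ i : Fin n, Measure.dirac (x i) with hμs
  have key : ∀ A B : Set X, (∀ i, x i ∈ B ↔ x i ∈ A) → μs B = μs A := by
    intro A B h
    rw [hμs, sum_dirac_apply, sum_dirac_apply]
    refine Finset.sum_congr rfl fun i _ => ?_
    by_cases hi : x i ∈ A
    · rw [Set.indicator_of_mem ((h i).2 hi), Set.indicator_of_mem hi]
    · rw [Set.indicator_of_notMem (fun hb => hi ((h i).1 hb)),
        Set.indicator_of_notMem hi]
  have hfin : IsFiniteMeasure μs := by
    constructor
    rw [hμs, sum_dirac_apply]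
    exact lt_of_le_of_lt (Finset.sum_le_card_nsmul _ _ 1 (by
      intro i _; by_cases h : x i ∈ Set.univ <;> simp [h])) (by simp)
  haveI : IsFiniteMeasureOnCompacts μs := ⟨fun _ _ => measure_lt_top _ _⟩
  haveI : μs.OuterRegular := by
    refine ⟨fun A hA r hr => ?_⟩
    refine ⟨(⋃ i ∈ {i : Fin n | x i ∉ A}, {x i})ᶜ, ?_, ?_, ?_⟩
    · intro a ha
      simp only [Set.mem_compl_iff, Set.mem_iUnion, Set.mem_singleton_iff, not_exists]
      rintro i hi rfl
      exact hi ha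
    · rw [isOpen_compl_iff]
      refine Set.Finite.isClosed ?_
      refine (Set.finite_range x).subset ?_
      rintro z hz
      simp only [Set.mem_iUnion, Set.mem_singleton_iff] at hz
      obtain ⟨i, -, rfl⟩ := hz
      exact ⟨i, rfl⟩
    · have : μs (⋃ i ∈ {i : Fin n | x i ∉ A}, {x i})ᶜ = μs A := by
        apply key
        intro i
        simp only [Set.mem_compl_iff, Set.mem_iUnion, Set.mem_singleton_iff, not_exists]
        constructor
        · intro h
          by_contra hiA
          exact h i hiA rfl
        · intro hiA j hj hji
          exact hj (hji ▸ hiA)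
      rwa [this]
  refine ⟨?_⟩
  · -- inner regular
    intro U hU r hr
    refine ⟨⋃ i ∈ {i : Fin n | x i ∈ U}, {x i}, ?_, ?_, ?_⟩
    · intro z hz
      simp only [Set.mem_iUnion, Set.mem_singleton_iff] at hz
      obtain ⟨i, hi, rfl⟩ := hz
      exact hi
    · refine Set.Finite.isCompact ?_
      refine (Set.finite_range x).subset ?_
      rintro z hz
      simp only [Set.mem_iUnion, Set.mem_singleton_iff] at hz
      obtain ⟨i, -, rfl⟩ := hz
      exact ⟨i, rfl⟩
    · have : μs (⋃ i ∈ {i : Fin n | x i ∈ U}, {x i}) = μs U := by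
        apply key
        intro i
        simp only [Set.mem_iUnion, Set.mem_singleton_iff]
        constructor
        · rintro ⟨j, hj, hji⟩; exact hji ▸ hj
        · intro h; exact ⟨i, h, rfl⟩
      rwa [this]

/-- Let a topological group `G` act continuously and strongly proximally on a
compact Hausdorff space `X`.  Then for any points `x₁, …, xₙ ∈ X`, the closure of the `G`-orbit
of the tuple `(x₁, …, xₙ)` in `Xⁿ` under the diagonal action contains the diagonal
`Δ(Xⁿ) = {(x, …, x) : x ∈ X}`. -/
theorem stmt_3 {G X : Type*} [Group G] [TopologicalSpace G] [IsTopologicalGroup G]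
    [TopologicalSpace X] [CompactSpace X] [T2Space X]
    [MeasurableSpace X] [BorelSpace X]
    [MulAction G X] [ContinuousSMul G X]
    (hsp : StronglyProximalSMul G X)
    (n : ℕ) (x : Fin n → X) (y : X) :
    (fun _ : Fin n => y) ∈ closure {p : Fin n → X | ∃ g : G, p = fun i => g • x i} := by
  rcases Nat.eq_zero_or_pos n with hn | hn
  · subst hn
    exact subset_closure ⟨1, funext fun i => i.elim0⟩
  have hn0 : (n : ℝ≥0∞) ≠ 0 := Nat.cast_ne_zero.mpr hn.ne'
  -- the averaged measure
  set νm : Measure X := (n : ℝ≥0∞)⁻¹ • ∑ i : Fin n, Measure.dirac (x i) with hνm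
  have hνuniv : νm Set.univ = 1 := by
    rw [hνm, Measure.smul_apply, sum_dirac_apply]
    simp only [Set.indicator_univ, Pi.one_apply, Finset.sum_const, Finset.card_univ,
      Fintype.card_fin, nsmul_eq_mul, mul_one, smul_eq_mul]
    exact ENNReal.inv_mul_cancel hn0 (ENNReal.natCast_ne_top n)
  have hνprob : IsProbabilityMeasure νm := ⟨hνuniv⟩
  have hνreg : νm.Regular := by
    rw [hνm]
    exact (regular_sum_dirac x).smul (ENNReal.inv_ne_top.mpr hn0)
  set ν : ProbabilityMeasure X := ⟨νm, hνprob⟩ with hν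
  set δy : ProbabilityMeasure X := ⟨Measure.dirac y, inferInstance⟩ with hδy
  set S : Set (ProbabilityMeasure X) :=
    {μ : ProbabilityMeasure X | ∃ g : G,
      (μ : Measure X) = (ν : Measure X).map (fun z => g • z)} with hS
  have hδ : δy ∈ closure S := hsp ν hνreg y
  -- main claim: for any open U ∋ y, there is g with all g • x i ∈ U
  have main : ∀ U : Set X, IsOpen U → y ∈ U → ∃ g : G, ∀ i, g • x i ∈ U := by
    intro U hU hyU
    -- Urysohn function
    obtain ⟨f, hf0, hf1, hf01⟩ := exists_continuous_zero_one_of_isClosed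
      hU.isClosed_compl (isClosed_singleton (x := y))
      (by simp [Set.disjoint_singleton_right, hyU])
    set fb : BoundedContinuousFunction X ℝ≥0 := BoundedContinuousFunction.mkOfCompact
      ⟨fun z => Real.toNNReal (f z), continuous_real_toNNReal.comp f.continuous⟩ with hfb
    have hfb_apply : ∀ z, fb z = Real.toNNReal (f z) := fun z => rfl
    have hfb_le_one : ∀ z, fb z ≤ 1 := by
      intro z
      rw [hfb_apply]
      exact Real.toNNReal_le_one.mpr (hf01 z).2
    have hfb_y : fb y = 1 := by
      rw [hfb_apply, hf1 rfl]
      simp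
    have hfb_zero : ∀ z, z ∉ U → fb z = 0 := by
      intro z hz
      rw [hfb_apply, hf0 hz]
      simp
    set a : ℝ≥0 := ((n - 1 : ℕ) : ℝ≥0) / (n : ℝ≥0) with ha
    have ha1 : a < 1 := by
      rw [ha, div_lt_one (by exact_mod_cast hn)]
      exact_mod_cast Nat.sub_lt hn one_pos
    set W : Set (ProbabilityMeasure X) :=
      {μ | a < μ.toFiniteMeasure.testAgainstNN fb} with hW
    have hWopen : IsOpen W :=
      isOpen_Ioi.preimage (ProbabilityMeasure.continuous_testAgainstNN_eval fb)
    have htest : ∀ μ : ProbabilityMeasure X,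
        (μ.toFiniteMeasure.testAgainstNN fb : ℝ≥0∞) = ∫⁻ z, (fb z : ℝ≥0∞) ∂(μ : Measure X) :=
      fun μ => FiniteMeasure.testAgainstNN_coe_eq
    have hδW : δy ∈ W := by
      have h2 : a < (ProbabilityMeasure.toFiniteMeasure δy).testAgainstNN fb := by
        rw [← ENNReal.coe_lt_coe, htest _]
        show (a : ℝ≥0∞) < ∫⁻ z, (fb z : ℝ≥0∞) ∂(Measure.dirac y)
        rw [lintegral_dirac' _ fb.continuous.measurable.coe_nnreal_ennreal, hfb_y]
        exact_mod_cast ha1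
      exact h2
    obtain ⟨μ, hμW, g, hμg⟩ := _root_.mem_closure_iff.mp hδ W hWopen hδW
    refine ⟨g, fun i => ?_⟩
    by_contra hi
    -- compute the test integral
    have hsmul_meas : Measurable fun z : X => g • z :=
      (continuous_const_smul g).measurable
    have hlint : ∫⁻ z, (fb z : ℝ≥0∞) ∂(μ : Measure X)
        = (n : ℝ≥0∞)⁻¹ * ∑ j : Fin n, (fb (g • x j) : ℝ≥0∞) := by
      rw [hμg, lintegral_map fb.continuous.measurable.coe_nnreal_ennreal hsmul_meas]
      show ∫⁻ z, (fb (g • z) : ℝ≥0∞) ∂νm = _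
      rw [hνm, lintegral_smul_measure, lintegral_finset_sum_measure]
      congr 1
      refine Finset.sum_congr rfl fun j _ => ?_
      exact lintegral_dirac' _ ((fb.continuous.comp
        (continuous_const_smul g)).measurable.coe_nnreal_ennreal)
    have hsum_le : ∑ j : Fin n, (fb (g • x j) : ℝ≥0∞) ≤ ((n - 1 : ℕ) : ℝ≥0∞) := by
      have h0 : (fb (g • x i) : ℝ≥0∞) = 0 := by
        rw [hfb_zero _ hi]; simp
      calc ∑ j : Fin n, (fb (g • x j) : ℝ≥0∞)
          = ∑ j ∈ Finset.univ.erase i, (fb (g • x j) : ℝ≥0∞) := by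
            rw [← Finset.sum_erase_add _ _ (Finset.mem_univ i), h0, add_zero]
        _ ≤ ∑ _j ∈ Finset.univ.erase i, (1 : ℝ≥0∞) := by
            refine Finset.sum_le_sum fun j _ => ?_
            exact_mod_cast hfb_le_one (g • x j)
        _ = ((n - 1 : ℕ) : ℝ≥0∞) := by
            simp [Finset.card_erase_of_mem]
    have hle : μ.toFiniteMeasure.testAgainstNN fb ≤ a := by
      rw [← ENNReal.coe_le_coe, htest, hlint]
      rw [ha, ENNReal.coe_div (by exact_mod_cast hn.ne'), ENNReal.div_eq_inv_mul]
      simp only [ENNReal.coe_natCast]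
      exact mul_le_mul_right hsum_le _
    exact absurd hμW (by rw [hW, Set.mem_setOf_eq]; exact not_lt.mpr hle)
  -- conclude using the product topology
  rw [_root_.mem_closure_iff]
  intro o ho hyo
  obtain ⟨I, u, hu, hsub⟩ := isOpen_pi_iff.mp ho _ hyo
  set U : Set X := ⋂ i ∈ I, u i with hUdef
  have hUopen : IsOpen U := isOpen_biInter_finset fun i hi => (hu i hi).1
  have hyU : y ∈ U := Set.mem_iInter₂.mpr fun i hi => (hu i hi).2
  obtain ⟨g, hg⟩ := main U hUopen hyU
  refine ⟨fun i => g • x i, ?_, ⟨g, rfl⟩⟩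
  apply hsub
  intro i hi
  exact Set.mem_iInter₂.mp (hg i) i hi
end

section
/- If (G,Q₁) and (G,Q₂) are irreducible affine representations of a topological group G and φ₁, φ₂ : Q₁ → Q₂ are affine homomorphisms, then φ₁ = φ₂. -/
open Set

/-- If `(G,Q₁)` and `(G,Q₂)` are irreducible affine representations of a
topological group `G` and `φ₁, φ₂ : Q₁ → Q₂` are affine homomorphisms (continuous, affine,
`G`-equivariant maps), then `φ₁ = φ₂`. -/
theorem stmt_6 {G X₁ X₂ : Type*} [Group G] [TopologicalSpace G] [IsTopologicalGroup G]
    [AddCommGroup X₁] [Module ℝ X₁] [TopologicalSpace X₁]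
    [IsTopologicalAddGroup X₁] [ContinuousSMul ℝ X₁] [T2Space X₁] [SeparatingDual ℝ X₁]
    [AddCommGroup X₂] [Module ℝ X₂] [TopologicalSpace X₂]
    [IsTopologicalAddGroup X₂] [ContinuousSMul ℝ X₂] [T2Space X₂] [SeparatingDual ℝ X₂]
    -- the irreducible affine representation `(G, Q₁)`
    (Q₁ : Set X₁) (hQ₁ne : Q₁.Nonempty) (hQ₁comp : IsCompact Q₁) (hQ₁conv : Convex ℝ Q₁)
    (ρ₁ : G → X₁ → X₁)
    (hmaps₁ : ∀ g : G, MapsTo (ρ₁ g) Q₁ Q₁)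
    (hcont₁ : ContinuousOn (fun p : G × X₁ => ρ₁ p.1 p.2) (univ ×ˢ Q₁))
    (hone₁ : ∀ x ∈ Q₁, ρ₁ 1 x = x)
    (hmul₁ : ∀ g h : G, ∀ x ∈ Q₁, ρ₁ (g * h) x = ρ₁ g (ρ₁ h x))
    (haff₁ : ∀ g : G, ∀ x₁ ∈ Q₁, ∀ x₂ ∈ Q₁, ∀ t : ℝ, 0 ≤ t → t ≤ 1 →
      ρ₁ g (t • x₁ + (1 - t) • x₂) = t • ρ₁ g x₁ + (1 - t) • ρ₁ g x₂)
    (hirr₁ : ∀ C : Set X₁, C ⊆ Q₁ → C.Nonempty → IsClosed C → Convex ℝ C →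
      (∀ g : G, MapsTo (ρ₁ g) C C) → C = Q₁)
    -- the irreducible affine representation `(G, Q₂)`
    (Q₂ : Set X₂) (hQ₂ne : Q₂.Nonempty) (hQ₂comp : IsCompact Q₂) (hQ₂conv : Convex ℝ Q₂)
    (ρ₂ : G → X₂ → X₂)
    (hmaps₂ : ∀ g : G, MapsTo (ρ₂ g) Q₂ Q₂)
    (hcont₂ : ContinuousOn (fun p : G × X₂ => ρ₂ p.1 p.2) (univ ×ˢ Q₂))
    (hone₂ : ∀ x ∈ Q₂, ρ₂ 1 x = x)
    (hmul₂ : ∀ g h : G, ∀ x ∈ Q₂, ρ₂ (g * h) x = ρ₂ g (ρ₂ h x))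
    (haff₂ : ∀ g : G, ∀ x₁ ∈ Q₂, ∀ x₂ ∈ Q₂, ∀ t : ℝ, 0 ≤ t → t ≤ 1 →
      ρ₂ g (t • x₁ + (1 - t) • x₂) = t • ρ₂ g x₁ + (1 - t) • ρ₂ g x₂)
    (hirr₂ : ∀ C : Set X₂, C ⊆ Q₂ → C.Nonempty → IsClosed C → Convex ℝ C →
      (∀ g : G, MapsTo (ρ₂ g) C C) → C = Q₂)
    -- two affine homomorphisms `φ₁, φ₂ : Q₁ → Q₂`
    (φ₁ φ₂ : X₁ → X₂)
    (hφ₁maps : MapsTo φ₁ Q₁ Q₂) (hφ₁cont : ContinuousOn φ₁ Q₁)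
    (hφ₁aff : ∀ x₁ ∈ Q₁, ∀ x₂ ∈ Q₁, ∀ t : ℝ, 0 ≤ t → t ≤ 1 →
      φ₁ (t • x₁ + (1 - t) • x₂) = t • φ₁ x₁ + (1 - t) • φ₁ x₂)
    (hφ₁equiv : ∀ g : G, ∀ x ∈ Q₁, φ₁ (ρ₁ g x) = ρ₂ g (φ₁ x))
    (hφ₂maps : MapsTo φ₂ Q₁ Q₂) (hφ₂cont : ContinuousOn φ₂ Q₁)
    (hφ₂aff : ∀ x₁ ∈ Q₁, ∀ x₂ ∈ Q₁, ∀ t : ℝ, 0 ≤ t → t ≤ 1 →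
      φ₂ (t • x₁ + (1 - t) • x₂) = t • φ₂ x₁ + (1 - t) • φ₂ x₂)
    (hφ₂equiv : ∀ g : G, ∀ x ∈ Q₁, φ₂ (ρ₁ g x) = ρ₂ g (φ₂ x)) :
    EqOn φ₁ φ₂ Q₁ := by
  classical
  -- the averaged map
  set ψ : X₁ → X₂ := fun x => (1/2 : ℝ) • φ₁ x + (1/2 : ℝ) • φ₂ x with hψdef
  have hψval : ∀ x, ψ x = (1/2 : ℝ) • φ₁ x + (1 - (1/2 : ℝ)) • φ₂ x := by
    intro x; norm_num [hψdef]
  have hψmaps : MapsTo ψ Q₁ Q₂ := by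
    intro x hx
    rw [hψval]
    exact hQ₂conv (hφ₁maps hx) (hφ₂maps hx) (by norm_num) (by norm_num) (by norm_num)
  have hψcont : ContinuousOn ψ Q₁ :=
    (continuousOn_const.smul hφ₁cont).add (continuousOn_const.smul hφ₂cont)
  -- ψ '' Q₁ is a nonempty closed convex invariant subset of Q₂, hence equals Q₂
  have hψaff : ∀ x ∈ Q₁, ∀ y ∈ Q₁, ∀ t : ℝ, 0 ≤ t → t ≤ 1 →
      ψ (t • x + (1 - t) • y) = t • ψ x + (1 - t) • ψ y := by
    intro x hx y hy t ht0 ht1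
    simp only [hψdef]
    rw [hφ₁aff x hx y hy t ht0 ht1, hφ₂aff x hx y hy t ht0 ht1]
    module
  have hψim : ψ '' Q₁ = Q₂ := by
    refine hirr₂ (ψ '' Q₁) (image_subset_iff.2 fun x hx => hψmaps hx)
      (hQ₁ne.image ψ) ?_ ?_ ?_
    · exact (hQ₁comp.image_of_continuousOn hψcont).isClosed
    · rintro - ⟨x, hx, rfl⟩ - ⟨y, hy, rfl⟩ t s ht hs hts
      refine ⟨t • x + s • y, hQ₁conv hx hy ht hs hts, ?_⟩
      have hs' : s = 1 - t := by linarith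
      subst hs'
      exact hψaff x hx y hy t ht (by linarith)
    · intro g
      rintro - ⟨x, hx, rfl⟩
      refine ⟨ρ₁ g x, hmaps₁ g hx, ?_⟩
      simp only [hψdef]
      rw [hφ₁equiv g x hx, hφ₂equiv g x hx]
      have := haff₂ g (φ₁ x) (hφ₁maps hx) (φ₂ x) (hφ₂maps hx) (1/2 : ℝ)
        (by norm_num) (by norm_num)
      rw [show (1 - (1/2 : ℝ)) = 1/2 by norm_num] at this
      exact this.symm
  -- Krein-Milman in the weak topology: Q₂ has an extreme point in a suitable sense
  haveI : T2Space (WeakSpace ℝ X₂) := by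
    refine ⟨fun x y hxy => ?_⟩
    obtain ⟨f, hf⟩ := SeparatingDual.exists_separating_of_ne (R := ℝ) (V := X₂)
      (show (x : X₂) ≠ y from hxy)
    exact separated_by_continuous
      (WeakBilin.eval_continuous ((topDualPairing ℝ X₂).flip) f) hf
  haveI : ContinuousSMul ℝ (WeakSpace ℝ X₂) :=
    WeakBilin.instContinuousSMul ((topDualPairing ℝ X₂).flip)
  haveI : LocallyConvexSpace ℝ (WeakSpace ℝ X₂) :=
    WeakBilin.locallyConvexSpace (B := (topDualPairing ℝ X₂).flip)
  set ι : X₂ →L[ℝ] WeakSpace ℝ X₂ := toWeakSpaceCLM ℝ X₂ with hιdef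
  have hιinj : Function.Injective ι := (toWeakSpaceCLM_bijective (𝕜 := ℝ) (E := X₂)).injective
  have hKcomp : IsCompact (ι '' Q₂) := hQ₂comp.image ι.continuous
  obtain ⟨e', he'⟩ := hKcomp.extremePoints_nonempty (hQ₂ne.image ι)
  obtain ⟨he'mem, he'ext⟩ := he'
  obtain ⟨e, heQ₂, rfl⟩ := he'mem
  -- e is a midpoint-extreme point of Q₂
  have hext : ∀ a ∈ Q₂, ∀ b ∈ Q₂, (1/2 : ℝ) • a + (1/2 : ℝ) • b = e → a = e ∧ b = e := by
    intro a ha b hb hab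
    have hseg : ι e ∈ openSegment ℝ (ι a) (ι b) := by
      refine ⟨1/2, 1/2, by norm_num, by norm_num, by norm_num, ?_⟩
      rw [← map_smul, ← map_smul, ← map_add, hab]
    obtain ⟨h1, h2⟩ := (mem_extremePoints.mp (show ι e ∈ (ι '' Q₂).extremePoints ℝ from ⟨⟨e, heQ₂, rfl⟩, he'ext⟩)).2 _ ⟨a, ha, rfl⟩ _ ⟨b, hb, rfl⟩ hseg
    exact ⟨hιinj h1, hιinj h2⟩
  -- there is a point where φ₁ and φ₂ agree
  have heψ : e ∈ ψ '' Q₁ := hψim.symm ▸ heQ₂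
  obtain ⟨x₀, hx₀, hx₀e⟩ := heψ
  have hx₀eq : φ₁ x₀ = φ₂ x₀ := by
    obtain ⟨h1, h2⟩ := hext (φ₁ x₀) (hφ₁maps hx₀) (φ₂ x₀) (hφ₂maps hx₀) hx₀e
    rw [h1, h2]
  -- the coincidence set
  set C : Set X₁ := {x ∈ Q₁ | φ₁ x = φ₂ x} with hCdef
  have hCsub : C ⊆ Q₁ := fun x hx => hx.1
  have hCne : C.Nonempty := ⟨x₀, hx₀, hx₀eq⟩
  have hCcomp : IsCompact C := by
    have hrestr : C = Subtype.val '' {x : Q₁ | φ₁ (x : X₁) = φ₂ (x : X₁)} := by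
      ext x
      constructor
      · rintro ⟨hx, hx'⟩; exact ⟨⟨x, hx⟩, hx', rfl⟩
      · rintro ⟨⟨y, hy⟩, hy', rfl⟩; exact ⟨hy, hy'⟩
    rw [hrestr]
    haveI : CompactSpace Q₁ := isCompact_iff_compactSpace.mp hQ₁comp
    have hclosed : IsClosed {x : Q₁ | φ₁ (x : X₁) = φ₂ (x : X₁)} :=
      isClosed_eq (hφ₁cont.restrict) (hφ₂cont.restrict)
    exact (hclosed.isCompact).image continuous_subtype_val
  have hCconv : Convex ℝ C := by
    rintro x ⟨hx, hxeq⟩ y ⟨hy, hyeq⟩ t s ht hs hts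
    refine ⟨hQ₁conv hx hy ht hs hts, ?_⟩
    have hs' : s = 1 - t := by linarith
    subst hs'
    rw [hφ₁aff x hx y hy t ht (by linarith), hφ₂aff x hx y hy t ht (by linarith),
      hxeq, hyeq]
  have hCinv : ∀ g : G, MapsTo (ρ₁ g) C C := by
    intro g x hx
    refine ⟨hmaps₁ g hx.1, ?_⟩
    rw [hφ₁equiv g x hx.1, hφ₂equiv g x hx.1, hx.2]
  have hCQ : C = Q₁ := hirr₁ C hCsub hCne hCcomp.isClosed hCconv hCinv
  intro x hx
  exact (hCQ.symm ▸ hx : x ∈ C).2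
end

section
/- Let φ₁, φ₂ : (V₁,τ) → (V₂,η) be homomorphisms of conic representations of a topological group G such that (V₂,η) is irreducible and the induced action of G on the closure of the set of extreme points of some compact section Q of V₁ is minimal. Then φ₂ = a·φ₁ for some real number a > 0. -/
open Set Topology Filter

/-- `Q` is a section of the cone `V`, defined by the continuous conic (additive, positively
homogeneous, nonnegative) function `L`, which is strictly positive away from `0`. -/
structure IsConicSection {X : Type*} [AddCommGroup X] [Module ℝ X] [TopologicalSpace X]
    (V : Set X) (L : X → ℝ) (Q : Set X) : Prop where
  continuousOn : ContinuousOn L V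
  nonneg : ∀ x ∈ V, 0 ≤ L x
  map_add : ∀ x ∈ V, ∀ y ∈ V, L (x + y) = L x + L y
  map_smul : ∀ x ∈ V, ∀ a : ℝ, 0 ≤ a → L (a • x) = a * L x
  pos : ∀ x ∈ V, x ≠ 0 → 0 < L x
  sect_eq : Q = {x ∈ V | L x = 1}

/-- A conic representation of a topological group `G`: a nonzero cone `V` (a subset of a real
topological vector space closed under nonnegative linear combinations) admitting a compact
section, together with a continuous action `τ` of `G` on `V` by maps preserving nonnegative
linear combinations. -/
structure IsConicRep (G : Type*) {X : Type*} [Group G] [TopologicalSpace G]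
    [AddCommGroup X] [Module ℝ X] [TopologicalSpace X]
    (V : Set X) (τ : G → X → X) : Prop where
  nonempty : V.Nonempty
  ne_zero : V ≠ {0}
  cone : ∀ x ∈ V, ∀ y ∈ V, ∀ a b : ℝ, 0 ≤ a → 0 ≤ b → a • x + b • y ∈ V
  mapsTo : ∀ g : G, MapsTo (τ g) V V
  continuousOn : ContinuousOn (fun p : G × X => τ p.1 p.2) (univ ×ˢ V)
  act_one : ∀ x ∈ V, τ 1 x = x
  act_mul : ∀ g h : G, ∀ x ∈ V, τ (g * h) x = τ g (τ h x)
  conic_act : ∀ g : G, ∀ x ∈ V, ∀ y ∈ V, ∀ a b : ℝ, 0 ≤ a → 0 ≤ b →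
    τ g (a • x + b • y) = a • τ g x + b • τ g y
  exists_compact_section : ∃ (L : X → ℝ) (Q : Set X), IsConicSection V L Q ∧ IsCompact Q

/-- A homomorphism of conic representations of `G`: a continuous map preserving nonnegative
linear combinations, vanishing only at `0`, and commuting with the group actions. -/
structure IsConicHom (G : Type*) {X₁ X₂ : Type*} [Group G]
    [AddCommGroup X₁] [Module ℝ X₁] [TopologicalSpace X₁]
    [AddCommGroup X₂] [Module ℝ X₂] [TopologicalSpace X₂]
    (V₁ : Set X₁) (τ : G → X₁ → X₁) (V₂ : Set X₂) (η : G → X₂ → X₂)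
    (φ : X₁ → X₂) : Prop where
  continuousOn : ContinuousOn φ V₁
  mapsTo : MapsTo φ V₁ V₂
  conic : ∀ x ∈ V₁, ∀ y ∈ V₁, ∀ a b : ℝ, 0 ≤ a → 0 ≤ b →
    φ (a • x + b • y) = a • φ x + b • φ y
  ne_zero : ∀ x ∈ V₁, x ≠ 0 → φ x ≠ 0
  equivariant : ∀ g : G, ∀ x ∈ V₁, φ (τ g x) = η g (φ x)

/-- A conic representation is irreducible if its only nonzero closed `G`-invariant subcone
is the whole cone. -/
def IsIrreducibleConicRep (G : Type*) {X : Type*} [Group G]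
    [AddCommGroup X] [Module ℝ X] [TopologicalSpace X]
    (V : Set X) (τ : G → X → X) : Prop :=
  ∀ W : Set X, W ⊆ V → W.Nonempty → W ≠ {0} → IsClosed W →
    (∀ x ∈ W, ∀ y ∈ W, ∀ a b : ℝ, 0 ≤ a → 0 ≤ b → a • x + b • y ∈ W) →
    (∀ g : G, MapsTo (τ g) W W) → W = V

/-- A conic representation is degenerate if it admits a `G`-invariant section. -/
def IsDegenerateConicRep (G : Type*) {X : Type*} [Group G]
    [AddCommGroup X] [Module ℝ X] [TopologicalSpace X]
    (V : Set X) (τ : G → X → X) : Prop :=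
  ∃ (L : X → ℝ) (Q : Set X), IsConicSection V L Q ∧ ∀ g : G, MapsTo (τ g) Q Q


section WeakKM

variable {X : Type*} [AddCommGroup X] [Module ℝ X] [TopologicalSpace X]
    [IsTopologicalAddGroup X] [ContinuousSMul ℝ X] [T2Space X] [SeparatingDual ℝ X]

instance : ContinuousSMul ℝ (WeakSpace ℝ X) :=
  inferInstanceAs (ContinuousSMul ℝ (WeakBilin (topDualPairing ℝ X).flip))

instance : LocallyConvexSpace ℝ (WeakSpace ℝ X) :=
  inferInstanceAs (LocallyConvexSpace ℝ (WeakBilin (topDualPairing ℝ X).flip))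

theorem weak_separatingDual : SeparatingDual ℝ (WeakSpace ℝ X) := by
  constructor
  intro x hx
  rcases (‹SeparatingDual ℝ X›).exists_ne_zero' (x : X) hx with ⟨f, hf⟩
  refine ⟨⟨f.toLinearMap, ?_⟩, hf⟩
  exact WeakBilin.eval_continuous ((topDualPairing ℝ X).flip) f

theorem isCompact_weak {A : Set X} (hA : IsCompact A) : IsCompact (@id (Set (WeakSpace ℝ X)) A) := by
  have h := hA.image (toWeakSpaceCLM ℝ X).continuous
  rwa [show ⇑(toWeakSpaceCLM ℝ X) '' A = A from image_id' A] at h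

theorem extremePoints_nonempty' {s : Set X} (hs : IsCompact s) (hne : s.Nonempty) :
    (s.extremePoints ℝ).Nonempty := by
  haveI := weak_separatingDual (X := X)
  haveI : T2Space (WeakSpace ℝ X) := SeparatingDual.t2Space (R := ℝ)
  have h := (isCompact_weak hs).extremePoints_nonempty hne
  exact h

theorem closure_convexHull_extremePoints' {s : Set X} (hs : IsCompact s) (hconv : Convex ℝ s) :
    closure (convexHull ℝ (s.extremePoints ℝ)) = s := by
  haveI := weak_separatingDual (X := X)
  haveI : T2Space (WeakSpace ℝ X) := SeparatingDual.t2Space (R := ℝ)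
  have hconvW : Convex ℝ (@id (Set (WeakSpace ℝ X)) s) := hconv
  have hKM := closure_convexHull_extremePoints (isCompact_weak hs) hconvW
  set C : Set X := closure (convexHull ℝ (s.extremePoints ℝ)) with hC
  have h1 : C ⊆ s :=
    closure_minimal (convexHull_min extremePoints_subset hconv) hs.isClosed
  refine Subset.antisymm h1 ?_
  have hCcomp : IsCompact C := hs.of_isClosed_subset isClosed_closure h1
  have hsub : s ⊆ (@id (Set (WeakSpace ℝ X)) C) := by
    have h2 : (@id (Set (WeakSpace ℝ X)) s) ⊆
        closure (convexHull ℝ (extremePoints ℝ (@id (Set (WeakSpace ℝ X)) s))) := hKM.ge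
    refine h2.trans (closure_minimal ?_ (isCompact_weak hCcomp).isClosed)
    exact show convexHull ℝ (s.extremePoints ℝ) ⊆ C from subset_closure
  exact hsub

end WeakKM

section ConeFacts0

variable {X : Type*} [AddCommGroup X] [Module ℝ X] {V : Set X}

theorem cone_zero_mem (hV : V.Nonempty)
    (hcone : ∀ x ∈ V, ∀ y ∈ V, ∀ a b : ℝ, 0 ≤ a → 0 ≤ b → a • x + b • y ∈ V) : (0:X) ∈ V := by
  obtain ⟨x, hx⟩ := hV
  have := hcone x hx x hx 0 0 le_rfl le_rfl
  simpa using this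

theorem cone_smul_mem
    (hcone : ∀ x ∈ V, ∀ y ∈ V, ∀ a b : ℝ, 0 ≤ a → 0 ≤ b → a • x + b • y ∈ V)
    {x : X} (hx : x ∈ V) {c : ℝ} (hc : 0 ≤ c) : c • x ∈ V := by
  have := hcone x hx x hx c 0 hc le_rfl
  simpa using this

end ConeFacts0

section ConeFacts

variable {X : Type*} [AddCommGroup X] [Module ℝ X] [TopologicalSpace X]
    [IsTopologicalAddGroup X] [ContinuousSMul ℝ X] [T2Space X]
variable {V Q : Set X} {L : X → ℝ}

namespace IsConicSection

theorem L_zero (hsec : IsConicSection V L Q) (h0 : (0:X) ∈ V) : L 0 = 0 := by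
  have := hsec.map_add 0 h0 0 h0
  simp only [add_zero] at this
  linarith

theorem Q_subset (hsec : IsConicSection V L Q) : Q ⊆ V := by
  rw [hsec.sect_eq]; exact fun x hx => hx.1

theorem L_one (hsec : IsConicSection V L Q) {x : X} (hx : x ∈ Q) : L x = 1 := by
  rw [hsec.sect_eq] at hx; exact hx.2

theorem zero_not_mem (hsec : IsConicSection V L Q) (h0 : (0:X) ∈ V) : (0:X) ∉ Q := by
  intro h
  have := hsec.L_one h
  rw [hsec.L_zero h0] at this
  norm_num at this

theorem ne_zero_of_mem_Q (hsec : IsConicSection V L Q) (h0 : (0:X) ∈ V) {x : X} (hx : x ∈ Q) :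
    x ≠ 0 := fun h => hsec.zero_not_mem h0 (h ▸ hx)

theorem normalize (hsec : IsConicSection V L Q)
    (hcone : ∀ x ∈ V, ∀ y ∈ V, ∀ a b : ℝ, 0 ≤ a → 0 ≤ b → a • x + b • y ∈ V)
    {x : X} (hx : x ∈ V) (hx0 : x ≠ 0) :
    0 < L x ∧ (L x)⁻¹ • x ∈ Q ∧ (L x) • ((L x)⁻¹ • x) = x := by
  have hpos : 0 < L x := hsec.pos x hx hx0
  have hinv : (0:ℝ) ≤ (L x)⁻¹ := inv_nonneg.mpr hpos.le
  have hmem : (L x)⁻¹ • x ∈ V := cone_smul_mem hcone hx hinv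
  refine ⟨hpos, ?_, smul_inv_smul₀ (ne_of_gt hpos) x⟩
  rw [hsec.sect_eq]
  refine ⟨hmem, ?_⟩
  rw [hsec.map_smul x hx _ hinv, inv_mul_cancel₀ (ne_of_gt hpos)]

theorem Q_convex (hsec : IsConicSection V L Q)
    (hcone : ∀ x ∈ V, ∀ y ∈ V, ∀ a b : ℝ, 0 ≤ a → 0 ≤ b → a • x + b • y ∈ V) :
    Convex ℝ Q := by
  intro x hx y hy a b ha hb hab
  have hxV : x ∈ V := hsec.Q_subset hx
  have hyV : y ∈ V := hsec.Q_subset hy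
  rw [hsec.sect_eq]
  refine ⟨hcone x hxV y hyV a b ha hb, ?_⟩
  rw [hsec.map_add _ (cone_smul_mem hcone hxV ha) _ (cone_smul_mem hcone hyV hb),
    hsec.map_smul x hxV a ha, hsec.map_smul y hyV b hb, hsec.L_one hx, hsec.L_one hy]
  linarith

theorem Q_nonempty (hsec : IsConicSection V L Q)
    (hcone : ∀ x ∈ V, ∀ y ∈ V, ∀ a b : ℝ, 0 ≤ a → 0 ≤ b → a • x + b • y ∈ V)
    (hVne : V.Nonempty) (hV0 : V ≠ {0}) : Q.Nonempty := by
  have : ∃ x ∈ V, x ≠ 0 := by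
    by_contra h
    push_neg at h
    apply hV0
    apply Subset.antisymm (fun x hx => h x hx)
    intro x hx
    have hx' : x = 0 := hx
    subst hx'
    exact cone_zero_mem hVne hcone
  obtain ⟨x, hx, hx0⟩ := this
  exact ⟨_, (hsec.normalize hcone hx hx0).2.1⟩

/-- The cone over a compact subset of the section is closed. -/
theorem cone_over_compact_isClosed (hsec : IsConicSection V L Q)
    {K : Set X} (hK : IsCompact K) (hKQ : K ⊆ Q) :
    IsClosed {v : X | ∃ t : ℝ, 0 ≤ t ∧ ∃ k ∈ K, v = t • k} := by
  rcases K.eq_empty_or_nonempty with rfl | ⟨k₀, hk₀⟩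
  · convert isClosed_empty
    ext v; simp
  set C := {v : X | ∃ t : ℝ, 0 ≤ t ∧ ∃ k ∈ K, v = t • k} with hCdef
  have hLC : ∀ w ∈ C, w ≠ 0 → (0 < L w ∧ (L w)⁻¹ • w ∈ K ∧ L w • ((L w)⁻¹ • w) = w) := by
    rintro w ⟨t, ht, k, hk, rfl⟩ hw0
    have hkQ := hKQ hk
    have hkV : k ∈ V := hsec.Q_subset hkQ
    have hLw : L (t • k) = t := by rw [hsec.map_smul k hkV t ht, hsec.L_one hkQ, mul_one]
    have ht0 : 0 < t := ht.lt_of_ne (by rintro rfl; simp at hw0)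
    refine ⟨by rw [hLw]; exact ht0, ?_, ?_⟩
    · rw [hLw, inv_smul_smul₀ (ne_of_gt ht0)]; exact hk
    · rw [hLw, smul_inv_smul₀ (ne_of_gt ht0)]
  apply isClosed_of_closure_subset
  intro v hv
  by_cases hv0 : v = 0
  · exact ⟨0, le_rfl, k₀, hk₀, by rw [hv0, zero_smul]⟩
  have hv' : v ∈ closure (C \ {0}) := by
    have h1 : closure C ⊆ closure (C \ {0}) ∪ closure {0} := by
      rw [← closure_union]
      refine closure_mono fun w hw => ?_
      by_cases h : w = 0
      · exact Or.inr h
      · exact Or.inl ⟨hw, h⟩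
    rcases h1 hv with h | h
    · exact h
    · exact absurd (by simpa using h) hv0
  haveI hne : (𝓝[C \ {0}] v).NeBot := mem_closure_iff_nhdsWithin_neBot.mp hv'
  set l := 𝓝[C \ {0}] v with hldef
  set g : X → ℝ × X := fun w => ((1 + L w)⁻¹, (L w)⁻¹ • w) with hgdef
  have hev : ∀ᶠ w in l, w ∈ C \ {0} := eventually_mem_nhdsWithin
  have hgK : ∀ᶠ w in l, g w ∈ Icc (0:ℝ) 1 ×ˢ K := by
    filter_upwards [hev] with w hw
    obtain ⟨hLpos, hqK, -⟩ := hLC w hw.1 hw.2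
    refine ⟨⟨inv_nonneg.mpr (by linarith), ?_⟩, hqK⟩
    rw [inv_le_one_iff₀]
    right; linarith
  haveI : (Filter.map g l).NeBot := Filter.map_neBot
  obtain ⟨⟨u₀, q₀⟩, hpmem, hp⟩ :=
    (isCompact_Icc.prod hK) (le_principal_iff.mpr (Filter.mem_map.mpr hgK))
  have hq₀K : q₀ ∈ K := hpmem.2
  have hu₀ : u₀ ∈ Icc (0:ℝ) 1 := hpmem.1
  have hl'ne : (l ⊓ Filter.comap g (𝓝 (u₀, q₀))).NeBot := by
    have h1 : (Filter.map g l ⊓ 𝓝 (u₀, q₀)).NeBot := by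
      have := hp
      rwa [ClusterPt, inf_comm] at this
    have h2 : (Filter.map g (l ⊓ Filter.comap g (𝓝 (u₀, q₀)))).NeBot := by
      rwa [Filter.push_pull]
    exact (Filter.map_neBot_iff g).mp h2
  set l' := l ⊓ Filter.comap g (𝓝 (u₀, q₀)) with hl'def
  haveI := hl'ne
  have hl'l : l' ≤ l := inf_le_left
  have hwv : Filter.Tendsto (fun w : X => w) l' (𝓝 v) :=
    tendsto_id.mono_left (hl'l.trans nhdsWithin_le_nhds)
  have hg : Filter.Tendsto g l' (𝓝 (u₀, q₀)) := Filter.tendsto_iff_comap.mpr inf_le_right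
  have hu : Filter.Tendsto (fun w => (1 + L w)⁻¹) l' (𝓝 u₀) :=
    (continuous_fst.tendsto (u₀, q₀)).comp hg
  have hq : Filter.Tendsto (fun w => (L w)⁻¹ • w) l' (𝓝 q₀) :=
    (continuous_snd.tendsto (u₀, q₀)).comp hg
  have hev' : ∀ᶠ w in l', w ∈ C \ {0} := hev.filter_mono hl'l
  by_cases hu0 : u₀ = 0
  · exfalso
    have hLinv : Filter.Tendsto (fun w => (L w)⁻¹) l' (𝓝 0) := by
      have h1 : Filter.Tendsto (fun w => (1 + L w)⁻¹ / (1 - (1 + L w)⁻¹)) l'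
          (𝓝 (u₀ / (1 - u₀))) := hu.div (tendsto_const_nhds.sub hu) (by rw [hu0]; norm_num)
      rw [hu0] at h1
      norm_num at h1
      refine Filter.Tendsto.congr' ?_ h1
      filter_upwards [hev'] with w hw
      have hLpos := (hLC w hw.1 hw.2).1
      have h1t : (1:ℝ) + L w ≠ 0 := by linarith
      field_simp
      rw [add_sub_cancel_left, div_self (ne_of_gt hLpos)]
    have hq0 : Filter.Tendsto (fun w => (L w)⁻¹ • w) l' (𝓝 ((0:ℝ) • v)) := hLinv.smul hwv
    rw [zero_smul] at hq0
    have hq₀0 : q₀ = 0 := tendsto_nhds_unique hq hq0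
    have h0V : (0:X) ∈ V := by
      have := hsec.Q_subset (hKQ hq₀K)
      rwa [hq₀0] at this
    exact hsec.zero_not_mem h0V (hq₀0 ▸ hKQ hq₀K)
  · have hu₀pos : 0 < u₀ := hu₀.1.lt_of_ne (Ne.symm hu0)
    have hL : Filter.Tendsto L l' (𝓝 (u₀⁻¹ - 1)) := by
      have h1 : Filter.Tendsto (fun w => ((1 + L w)⁻¹)⁻¹ - 1) l' (𝓝 (u₀⁻¹ - 1)) :=
        (hu.inv₀ (ne_of_gt hu₀pos)).sub tendsto_const_nhds
      simpa using h1
    have hcomb : Filter.Tendsto (fun w => L w • ((L w)⁻¹ • w)) l' (𝓝 ((u₀⁻¹ - 1) • q₀)) :=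
      hL.smul hq
    have heq : ∀ᶠ w in l', L w • ((L w)⁻¹ • w) = w := by
      filter_upwards [hev'] with w hw
      exact (hLC w hw.1 hw.2).2.2
    have hfin : Filter.Tendsto (fun w : X => w) l' (𝓝 ((u₀⁻¹ - 1) • q₀)) :=
      hcomb.congr' heq
    have hveq : v = (u₀⁻¹ - 1) • q₀ := tendsto_nhds_unique hwv hfin
    refine ⟨u₀⁻¹ - 1, ?_, q₀, hq₀K, hveq⟩
    have h2 : u₀ * u₀⁻¹ = 1 := mul_inv_cancel₀ (ne_of_gt hu₀pos)
    nlinarith [hu₀.2, inv_pos.mpr hu₀pos]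

end IsConicSection

end ConeFacts

section HomFacts

variable {G X₁ X₂ : Type*} [Group G] [TopologicalSpace G]
    [AddCommGroup X₁] [Module ℝ X₁] [TopologicalSpace X₁]
    [AddCommGroup X₂] [Module ℝ X₂] [TopologicalSpace X₂]
    {V₁ : Set X₁} {τ : G → X₁ → X₁} {V₂ : Set X₂} {η : G → X₂ → X₂} {φ : X₁ → X₂}

namespace IsConicHom

theorem map_zero' (hφ : IsConicHom G V₁ τ V₂ η φ) (h0 : (0:X₁) ∈ V₁) : φ 0 = 0 := by
  have := hφ.conic 0 h0 0 h0 0 0 le_rfl le_rfl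
  simpa using this

theorem map_smul' (hφ : IsConicHom G V₁ τ V₂ η φ) (h0 : (0:X₁) ∈ V₁) {x : X₁} (hx : x ∈ V₁)
    {c : ℝ} (hc : 0 ≤ c) : φ (c • x) = c • φ x := by
  have := hφ.conic x hx 0 h0 c 0 hc le_rfl
  simpa using this

theorem map_add' (hφ : IsConicHom G V₁ τ V₂ η φ) {x y : X₁} (hx : x ∈ V₁) (hy : y ∈ V₁) :
    φ (x + y) = φ x + φ y := by
  have := hφ.conic x hx y hy 1 1 zero_le_one zero_le_one
  simpa using this

end IsConicHom

namespace IsConicRep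

theorem zero_mem (hrep : IsConicRep G V₁ τ) : (0:X₁) ∈ V₁ :=
  cone_zero_mem hrep.nonempty hrep.cone

theorem act_zero (hrep : IsConicRep G V₁ τ) (g : G) : τ g 0 = 0 := by
  have := hrep.conic_act g 0 hrep.zero_mem 0 hrep.zero_mem 0 0 le_rfl le_rfl
  simpa using this

theorem act_smul (hrep : IsConicRep G V₁ τ) (g : G) {x : X₁} (hx : x ∈ V₁) {c : ℝ}
    (hc : 0 ≤ c) : τ g (c • x) = c • τ g x := by
  have := hrep.conic_act g x hx 0 hrep.zero_mem c 0 hc le_rfl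
  simpa [hrep.act_zero g] using this

theorem act_add (hrep : IsConicRep G V₁ τ) (g : G) {x y : X₁} (hx : x ∈ V₁) (hy : y ∈ V₁) :
    τ g (x + y) = τ g x + τ g y := by
  have := hrep.conic_act g x hx y hy 1 1 zero_le_one zero_le_one
  simpa using this

theorem act_ne_zero (hrep : IsConicRep G V₁ τ) (g : G) {x : X₁} (hx : x ∈ V₁) (hx0 : x ≠ 0) :
    τ g x ≠ 0 := by
  intro h
  apply hx0
  have h1 : τ (g⁻¹ * g) x = τ g⁻¹ (τ g x) := hrep.act_mul g⁻¹ g x hx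
  rw [h, hrep.act_zero g⁻¹] at h1
  rw [inv_mul_cancel] at h1
  rw [← hrep.act_one x hx, h1]

theorem act_continuousOn (hrep : IsConicRep G V₁ τ) (g : G) : ContinuousOn (τ g) V₁ := by
  have h1 : ContinuousOn (fun x : X₁ => (fun p : G × X₁ => τ p.1 p.2) (g, x)) V₁ :=
    hrep.continuousOn.comp ((continuous_const.prodMk continuous_id).continuousOn)
      (fun x hx => ⟨mem_univ g, hx⟩)
  exact h1

theorem act_inv_act (hrep : IsConicRep G V₁ τ) (g : G) {x : X₁} (hx : x ∈ V₁) :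
    τ g⁻¹ (τ g x) = x := by
  rw [← hrep.act_mul g⁻¹ g x hx, inv_mul_cancel, hrep.act_one x hx]

theorem act_act_inv (hrep : IsConicRep G V₁ τ) (g : G) {x : X₁} (hx : x ∈ V₁) :
    τ g (τ g⁻¹ x) = x := by
  rw [← hrep.act_mul g g⁻¹ x hx, mul_inv_cancel, hrep.act_one x hx]

end IsConicRep

end HomFacts

set_option maxHeartbeats 2000000 in
/-- Let `φ₁, φ₂ : (V₁,τ) → (V₂,η)` be homomorphisms of conic representations
of a topological group `G` such that `(V₂,η)` is irreducible and the induced action of `G` on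
the closure of the set of extreme points of some compact section `Q` of `V₁` is minimal.
Then `φ₂ = a·φ₁` for some real number `a > 0`. -/
theorem stmt_12 {G X₁ X₂ : Type*} [Group G] [TopologicalSpace G] [IsTopologicalGroup G]
    [AddCommGroup X₁] [Module ℝ X₁] [TopologicalSpace X₁]
    [IsTopologicalAddGroup X₁] [ContinuousSMul ℝ X₁] [T2Space X₁] [SeparatingDual ℝ X₁]
    [AddCommGroup X₂] [Module ℝ X₂] [TopologicalSpace X₂]
    [IsTopologicalAddGroup X₂] [ContinuousSMul ℝ X₂] [T2Space X₂] [SeparatingDual ℝ X₂]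
    (V₁ : Set X₁) (τ : G → X₁ → X₁) (hrep₁ : IsConicRep G V₁ τ)
    (V₂ : Set X₂) (η : G → X₂ → X₂) (hrep₂ : IsConicRep G V₂ η)
    (hirr₂ : IsIrreducibleConicRep G V₂ η)
    (φ₁ φ₂ : X₁ → X₂)
    (hφ₁ : IsConicHom G V₁ τ V₂ η φ₁) (hφ₂ : IsConicHom G V₁ τ V₂ η φ₂)
    -- a compact section `Q` of `V₁`
    (L : X₁ → ℝ) (Q : Set X₁) (hsec : IsConicSection V₁ L Q) (hQcomp : IsCompact Q)
    -- the induced action `ρ_g x = L(τ_g x)⁻¹ • τ_g x` of `G` on the closure of the set of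
    -- extreme points of `Q` is minimal
    (hmin : ∀ x ∈ closure (Q.extremePoints ℝ),
      closure (Q.extremePoints ℝ) ⊆ closure {y | ∃ g : G, y = (L (τ g x))⁻¹ • τ g x}) :
    ∃ a : ℝ, 0 < a ∧ ∀ x ∈ V₁, φ₂ x = a • φ₁ x := by
    classical
  obtain ⟨L₂, Q₂, hsec₂, hQ₂comp⟩ := hrep₂.exists_compact_section
  have h0V₁ : (0:X₁) ∈ V₁ := hrep₁.zero_mem
  have h0V₂ : (0:X₂) ∈ V₂ := hrep₂.zero_mem
  have hQsub : Q ⊆ V₁ := hsec.Q_subset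
  have hQ₂sub : Q₂ ⊆ V₂ := hsec₂.Q_subset
  have h0Q : (0:X₁) ∉ Q := hsec.zero_not_mem h0V₁
  have h0Q₂ : (0:X₂) ∉ Q₂ := hsec₂.zero_not_mem h0V₂
  have hQconv : Convex ℝ Q := hsec.Q_convex hrep₁.cone
  have hQne : Q.Nonempty := hsec.Q_nonempty hrep₁.cone hrep₁.nonempty hrep₁.ne_zero
  have hQ₂ne : Q₂.Nonempty := hsec₂.Q_nonempty hrep₂.cone hrep₂.nonempty hrep₂.ne_zero
  -- the sum homomorphism
  set Θ : X₁ → X₂ := fun x => φ₁ x + φ₂ x with hΘdef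
  have hΘV : ∀ x ∈ V₁, Θ x ∈ V₂ := by
    intro x hx
    have := hrep₂.cone _ (hφ₁.mapsTo hx) _ (hφ₂.mapsTo hx) 1 1 zero_le_one zero_le_one
    simpa [hΘdef] using this
  have hΘne : ∀ x ∈ V₁, x ≠ 0 → Θ x ≠ 0 := by
    intro x hx hx0 h
    have h₁ := hφ₁.ne_zero x hx hx0
    have hadd := hsec₂.map_add _ (hφ₁.mapsTo hx) _ (hφ₂.mapsTo hx)
    have hL0 : L₂ (0:X₂) = 0 := hsec₂.L_zero h0V₂
    have h2 : L₂ (φ₁ x) + L₂ (φ₂ x) = 0 := by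
      rw [← hadd]
      have hx2 : φ₁ x + φ₂ x = 0 := h
      rw [hx2, hL0]
    have h3 := hsec₂.pos _ (hφ₁.mapsTo hx) h₁
    have h4 := hsec₂.nonneg _ (hφ₂.mapsTo hx)
    linarith
  have hΘsmul : ∀ x ∈ V₁, ∀ c : ℝ, 0 ≤ c → Θ (c • x) = c • Θ x := by
    intro x hx c hc
    simp only [hΘdef]
    rw [hφ₁.map_smul' h0V₁ hx hc, hφ₂.map_smul' h0V₁ hx hc, smul_add]
  have hΘadd : ∀ x ∈ V₁, ∀ y ∈ V₁, Θ (x + y) = Θ x + Θ y := by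
    intro x hx y hy
    simp only [hΘdef]
    rw [hφ₁.map_add' hx hy, hφ₂.map_add' hx hy]
    abel
  have hΘcont : ContinuousOn Θ V₁ := by
    simp only [hΘdef]
    exact hφ₁.continuousOn.add hφ₂.continuousOn
  have hℓpos : ∀ c ∈ Q, 0 < L₂ (Θ c) := fun c hc =>
    hsec₂.pos _ (hΘV c (hQsub hc)) (hΘne c (hQsub hc) (hsec.ne_zero_of_mem_Q h0V₁ hc))
  -- the normalized map into the section of V₂
  set N : X₁ → X₂ := fun x => (L₂ (Θ x))⁻¹ • Θ x with hNdef
  have hNQ₂ : ∀ c ∈ Q, N c ∈ Q₂ := by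
    intro c hc
    exact (hsec₂.normalize hrep₂.cone (hΘV c (hQsub hc))
      (hΘne c (hQsub hc) (hsec.ne_zero_of_mem_Q h0V₁ hc))).2.1
  have hNcont : ContinuousOn N Q := by
    simp only [hNdef]
    have h1 : ContinuousOn (fun x => L₂ (Θ x)) Q :=
      hsec₂.continuousOn.comp (hΘcont.mono hQsub) (fun x hx => hΘV x (hQsub hx))
    exact (h1.inv₀ (fun c hc => ne_of_gt (hℓpos c hc))).smul (hΘcont.mono hQsub)
  have hrecover : ∀ c ∈ Q, (L₂ (Θ c)) • N c = Θ c := by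
    intro c hc
    simp only [hNdef]
    exact smul_inv_smul₀ (ne_of_gt (hℓpos c hc)) _
  -- the invariant subcone C generated by Θ '' Q
  set C : Set X₂ := {v : X₂ | ∃ t : ℝ, 0 ≤ t ∧ ∃ c ∈ Q, v = t • Θ c} with hCdef
  obtain ⟨q₀, hq₀⟩ := hQne
  have hCsub : C ⊆ V₂ := by
    rintro v ⟨t, ht, c, hc, rfl⟩
    exact cone_smul_mem hrep₂.cone (hΘV c (hQsub hc)) ht
  have hΘq₀C : Θ q₀ ∈ C := ⟨1, zero_le_one, q₀, hq₀, (one_smul _ _).symm⟩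
  have hCnonempty : C.Nonempty := ⟨Θ q₀, hΘq₀C⟩
  have hΘq₀ : Θ q₀ ≠ 0 := hΘne q₀ (hQsub hq₀) (hsec.ne_zero_of_mem_Q h0V₁ hq₀)
  have hCne0 : C ≠ {0} := by
    intro h
    apply hΘq₀
    rw [h] at hΘq₀C
    exact hΘq₀C
  have hCclosed : IsClosed C := by
    have hKcomp : IsCompact (N '' Q) := hQcomp.image_of_continuousOn hNcont
    have hKQ₂ : N '' Q ⊆ Q₂ := by rintro v ⟨c, hc, rfl⟩; exact hNQ₂ c hc
    have hCeq : C = {v : X₂ | ∃ t : ℝ, 0 ≤ t ∧ ∃ k ∈ N '' Q, v = t • k} := by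
      ext v
      constructor
      · rintro ⟨t, ht, c, hc, rfl⟩
        refine ⟨t * L₂ (Θ c), mul_nonneg ht (hℓpos c hc).le, N c, ⟨c, hc, rfl⟩, ?_⟩
        rw [mul_smul, hrecover c hc]
      · rintro ⟨t, ht, k, ⟨c, hc, rfl⟩, rfl⟩
        refine ⟨t * (L₂ (Θ c))⁻¹, mul_nonneg ht (inv_nonneg.mpr (hℓpos c hc).le), c, hc, ?_⟩
        simp only [hNdef]
        rw [mul_smul]
    rw [hCeq]
    exact hsec₂.cone_over_compact_isClosed hKcomp hKQ₂
  have hCcone : ∀ x ∈ C, ∀ y ∈ C, ∀ a b : ℝ, 0 ≤ a → 0 ≤ b → a • x + b • y ∈ C := by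
    rintro _ ⟨t₁, ht₁, c₁, hc₁, rfl⟩ _ ⟨t₂, ht₂, c₂, hc₂, rfl⟩ a b ha hb
    have h1a : 0 ≤ a * t₁ := mul_nonneg ha ht₁
    have h1b : 0 ≤ b * t₂ := mul_nonneg hb ht₂
    rcases eq_or_lt_of_le (add_nonneg h1a h1b) with hs | hs
    · have h2a : a * t₁ = 0 := by linarith
      have h2b : b * t₂ = 0 := by linarith
      refine ⟨0, le_rfl, c₁, hc₁, ?_⟩
      rw [smul_smul, smul_smul, h2a, h2b]
      simp
    · have hs0 : a * t₁ + b * t₂ ≠ 0 := ne_of_gt hs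
      have hc' : (a * t₁ / (a * t₁ + b * t₂)) • c₁ + (b * t₂ / (a * t₁ + b * t₂)) • c₂ ∈ Q :=
        hQconv hc₁ hc₂ (div_nonneg h1a hs.le) (div_nonneg h1b hs.le) (by field_simp)
      refine ⟨a * t₁ + b * t₂, hs.le, _, hc', ?_⟩
      have e1 : Θ ((a * t₁ / (a * t₁ + b * t₂)) • c₁ + (b * t₂ / (a * t₁ + b * t₂)) • c₂)
          = (a * t₁ / (a * t₁ + b * t₂)) • Θ c₁ + (b * t₂ / (a * t₁ + b * t₂)) • Θ c₂ := by
        rw [hΘadd _ (cone_smul_mem hrep₁.cone (hQsub hc₁) (div_nonneg h1a hs.le))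
            _ (cone_smul_mem hrep₁.cone (hQsub hc₂) (div_nonneg h1b hs.le)),
          hΘsmul c₁ (hQsub hc₁) _ (div_nonneg h1a hs.le),
          hΘsmul c₂ (hQsub hc₂) _ (div_nonneg h1b hs.le)]
      rw [e1]
      match_scalars <;> field_simp <;> ring
  have hCinv : ∀ g : G, MapsTo (η g) C C := by
    intro g
    rintro _ ⟨t, ht, c, hc, rfl⟩
    have hcV : c ∈ V₁ := hQsub hc
    have hc0 : c ≠ 0 := hsec.ne_zero_of_mem_Q h0V₁ hc
    have hτc : τ g c ∈ V₁ := hrep₁.mapsTo g hcV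
    have hτc0 : τ g c ≠ 0 := hrep₁.act_ne_zero g hcV hc0
    obtain ⟨hLpos, hchatQ, hchateq⟩ := hsec.normalize hrep₁.cone hτc hτc0
    have e1 : η g (t • Θ c) = t • η g (Θ c) := hrep₂.act_smul g (hΘV c hcV) ht
    have e2 : η g (Θ c) = Θ (τ g c) := by
      simp only [hΘdef]
      rw [hrep₂.act_add g (hφ₁.mapsTo hcV) (hφ₂.mapsTo hcV), hφ₁.equivariant g c hcV,
        hφ₂.equivariant g c hcV]
    have e3 : Θ ((L (τ g c))⁻¹ • τ g c) = (L (τ g c))⁻¹ • Θ (τ g c) :=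
      hΘsmul _ hτc _ (inv_nonneg.mpr hLpos.le)
    refine ⟨t * L (τ g c), mul_nonneg ht hLpos.le, _, hchatQ, ?_⟩
    rw [e1, e2, e3, smul_smul, mul_assoc, mul_inv_cancel₀ (ne_of_gt hLpos), mul_one]
  -- irreducibility
  have hCV₂ : C = V₂ := hirr₂ C hCsub hCnonempty hCne0 hCclosed hCcone hCinv
  -- every element of Q₂ is a normalized Θ-image
  have hQ₂img : ∀ q ∈ Q₂, ∃ c ∈ Q, N c = q := by
    intro q hq
    have hqC : q ∈ C := by rw [hCV₂]; exact hQ₂sub hq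
    obtain ⟨t, ht, c, hc, rfl⟩ := hqC
    have hLq : t * L₂ (Θ c) = 1 := by
      have h5 := hsec₂.L_one hq
      rwa [hsec₂.map_smul _ (hΘV c (hQsub hc)) t ht] at h5
    refine ⟨c, hc, ?_⟩
    simp only [hNdef]
    rw [eq_inv_of_mul_eq_one_left hLq]
  -- extreme point of Q₂
  obtain ⟨e, he⟩ := extremePoints_nonempty' hQ₂comp hQ₂ne
  rw [mem_extremePoints] at he
  have heQ₂ : e ∈ Q₂ := he.1
  -- the fiber of e in Q
  set F : Set X₁ := Q ∩ N ⁻¹' {e} with hFdef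
  have hFsub : F ⊆ Q := inter_subset_left
  have hFne : F.Nonempty := by
    obtain ⟨c, hc, hceq⟩ := hQ₂img e heQ₂
    exact ⟨c, hc, by simp [hceq]⟩
  have hFclosed : IsClosed F :=
    hNcont.preimage_isClosed_of_isClosed hQcomp.isClosed isClosed_singleton
  have hFcomp : IsCompact F := hQcomp.of_isClosed_subset hFclosed hFsub
  obtain ⟨xs, hxs⟩ := extremePoints_nonempty' hFcomp hFne
  rw [mem_extremePoints] at hxs
  have hxsF : xs ∈ F := hxs.1
  have hxsQ : xs ∈ Q := hxsF.1
  have hNxs : N xs = e := by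
    have := hxsF.2
    simpa using this
  -- segments are mapped into segments by the normalized map
  have hNseg : ∀ y ∈ Q, ∀ z ∈ Q, ∀ p q : ℝ, 0 < p → 0 < q → p + q = 1 →
      N (p • y + q • z) ∈ openSegment ℝ (N y) (N z) := by
    intro y hy z hz p q hp hq hpq
    have hyV := hQsub hy
    have hzV := hQsub hz
    have hw : p • y + q • z ∈ Q := hQconv hy hz hp.le hq.le hpq
    have hΘw : Θ (p • y + q • z) = p • Θ y + q • Θ z := by
      rw [hΘadd _ (cone_smul_mem hrep₁.cone hyV hp.le) _ (cone_smul_mem hrep₁.cone hzV hq.le),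
        hΘsmul y hyV p hp.le, hΘsmul z hzV q hq.le]
    have hLw : L₂ (Θ (p • y + q • z)) = p * L₂ (Θ y) + q * L₂ (Θ z) := by
      rw [hΘw, hsec₂.map_add _ (cone_smul_mem hrep₂.cone (hΘV y hyV) hp.le)
          _ (cone_smul_mem hrep₂.cone (hΘV z hzV) hq.le),
        hsec₂.map_smul _ (hΘV y hyV) p hp.le, hsec₂.map_smul _ (hΘV z hzV) q hq.le]
    have hyp : 0 < L₂ (Θ y) := hℓpos y hy
    have hzp : 0 < L₂ (Θ z) := hℓpos z hz
    have hwp : 0 < L₂ (Θ (p • y + q • z)) := hℓpos _ hw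
    have hS : 0 < p * L₂ (Θ y) + q * L₂ (Θ z) := by positivity
    refine ⟨p * L₂ (Θ y) / (p * L₂ (Θ y) + q * L₂ (Θ z)),
      q * L₂ (Θ z) / (p * L₂ (Θ y) + q * L₂ (Θ z)), by positivity, by positivity, ?_, ?_⟩
    · rw [← add_div, div_self (ne_of_gt hS)]
    · simp only [hNdef]
      rw [hLw, hΘw]
      match_scalars <;> field_simp <;> ring
  -- xs is an extreme point of Q
  have hxsExtQ : xs ∈ Q.extremePoints ℝ := by
    rw [mem_extremePoints]
    refine ⟨hxsQ, ?_⟩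
    intro y hy z hz hseg
    obtain ⟨p, q, hp, hq, hpq, heq⟩ := hseg
    have h1 : N (p • y + q • z) ∈ openSegment ℝ (N y) (N z) := hNseg y hy z hz p q hp hq hpq
    rw [heq, hNxs] at h1
    have h2 := he.2 (N y) (hNQ₂ y hy) (N z) (hNQ₂ z hz) h1
    have hyF : y ∈ F := ⟨hy, by simp [h2.1]⟩
    have hzF : z ∈ F := ⟨hz, by simp [h2.2]⟩
    exact hxs.2 y hyF z hzF ⟨p, q, hp, hq, hpq, heq⟩
  -- extremality of e forces proportionality at xs
  have hxsV : xs ∈ V₁ := hQsub hxsQ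
  have hxs0 : xs ≠ 0 := hsec.ne_zero_of_mem_Q h0V₁ hxsQ
  have hφ₁xs : φ₁ xs ∈ V₂ := hφ₁.mapsTo hxsV
  have hφ₂xs : φ₂ xs ∈ V₂ := hφ₂.mapsTo hxsV
  have hφ₁xs0 : φ₁ xs ≠ 0 := hφ₁.ne_zero xs hxsV hxs0
  have hφ₂xs0 : φ₂ xs ≠ 0 := hφ₂.ne_zero xs hxsV hxs0
  obtain ⟨hl₁pos, hN₁Q₂, -⟩ := hsec₂.normalize hrep₂.cone hφ₁xs hφ₁xs0
  obtain ⟨hl₂pos, hN₂Q₂, -⟩ := hsec₂.normalize hrep₂.cone hφ₂xs hφ₂xs0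
  have hsum : L₂ (Θ xs) = L₂ (φ₁ xs) + L₂ (φ₂ xs) := by
    simp only [hΘdef]
    exact hsec₂.map_add _ hφ₁xs _ hφ₂xs
  have hΘxspos : 0 < L₂ (Θ xs) := hℓpos xs hxsQ
  have hesegm : e ∈ openSegment ℝ ((L₂ (φ₁ xs))⁻¹ • φ₁ xs) ((L₂ (φ₂ xs))⁻¹ • φ₂ xs) := by
    rw [← hNxs]
    have hS2 : 0 < L₂ (φ₁ xs) + L₂ (φ₂ xs) := by positivity
    refine ⟨L₂ (φ₁ xs) / (L₂ (φ₁ xs) + L₂ (φ₂ xs)), L₂ (φ₂ xs) / (L₂ (φ₁ xs) + L₂ (φ₂ xs)),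
      by positivity, by positivity, ?_, ?_⟩
    · rw [← add_div, div_self (ne_of_gt hS2)]
    · simp only [hNdef, hΘdef]
      rw [show L₂ (φ₁ xs + φ₂ xs) = L₂ (φ₁ xs) + L₂ (φ₂ xs) from hsec₂.map_add _ hφ₁xs _ hφ₂xs]
      match_scalars <;> field_simp <;> ring
  have h3 := he.2 _ hN₁Q₂ _ hN₂Q₂ hesegm
  set a : ℝ := L₂ (φ₂ xs) * (L₂ (φ₁ xs))⁻¹ with hadef
  have hapos : 0 < a := mul_pos hl₂pos (inv_pos.mpr hl₁pos)
  have haxs : φ₂ xs = a • φ₁ xs := by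
    have h4 : (L₂ (φ₂ xs))⁻¹ • φ₂ xs = (L₂ (φ₁ xs))⁻¹ • φ₁ xs := h3.2.trans h3.1.symm
    calc φ₂ xs = L₂ (φ₂ xs) • ((L₂ (φ₂ xs))⁻¹ • φ₂ xs) :=
          (smul_inv_smul₀ (ne_of_gt hl₂pos) _).symm
      _ = L₂ (φ₂ xs) • ((L₂ (φ₁ xs))⁻¹ • φ₁ xs) := by rw [h4]
      _ = a • φ₁ xs := by rw [smul_smul]
  -- propagation over the closure of the extreme points by minimality
  have hE'Q : closure (Q.extremePoints ℝ) ⊆ Q := closure_minimal extremePoints_subset hQcomp.isClosed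
  have hxsE' : xs ∈ closure (Q.extremePoints ℝ) := subset_closure hxsExtQ
  have hρQ : ∀ g : G, ∀ x ∈ Q, (L (τ g x))⁻¹ • τ g x ∈ Q := by
    intro g x hx
    exact (hsec.normalize hrep₁.cone (hrep₁.mapsTo g (hQsub hx))
      (hrep₁.act_ne_zero g (hQsub hx) (hsec.ne_zero_of_mem_Q h0V₁ hx))).2.1
  -- extreme points are preserved by the induced action
  have hρext : ∀ g : G, ∀ x ∈ Q.extremePoints ℝ, (L (τ g x))⁻¹ • τ g x ∈ Q.extremePoints ℝ := by
    intro g x hx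
    rw [mem_extremePoints] at hx
    obtain ⟨hxQ, hxext⟩ := hx
    have hxV : x ∈ V₁ := hQsub hxQ
    have hx0 : x ≠ 0 := hsec.ne_zero_of_mem_Q h0V₁ hxQ
    have hτx : τ g x ∈ V₁ := hrep₁.mapsTo g hxV
    have hτx0 : τ g x ≠ 0 := hrep₁.act_ne_zero g hxV hx0
    have hℓ : 0 < L (τ g x) := hsec.pos _ hτx hτx0
    rw [mem_extremePoints]
    refine ⟨hρQ g x hxQ, ?_⟩
    intro y hy z hz hseg
    obtain ⟨p, q, hp, hq, hpq, heq⟩ := hseg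
    have hyV := hQsub hy
    have hzV := hQsub hz
    have hy0 : y ≠ 0 := hsec.ne_zero_of_mem_Q h0V₁ hy
    have hz0 : z ≠ 0 := hsec.ne_zero_of_mem_Q h0V₁ hz
    have huV : τ g⁻¹ y ∈ V₁ := hrep₁.mapsTo g⁻¹ hyV
    have hwV : τ g⁻¹ z ∈ V₁ := hrep₁.mapsTo g⁻¹ hzV
    have hu0 : τ g⁻¹ y ≠ 0 := hrep₁.act_ne_zero g⁻¹ hyV hy0
    have hw0 : τ g⁻¹ z ≠ 0 := hrep₁.act_ne_zero g⁻¹ hzV hz0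
    obtain ⟨hLu, huQ, hueq⟩ := hsec.normalize hrep₁.cone huV hu0
    obtain ⟨hLw, hwQ, hweq⟩ := hsec.normalize hrep₁.cone hwV hw0
    have h5 : τ g⁻¹ (p • y + q • z) = p • τ g⁻¹ y + q • τ g⁻¹ z :=
      hrep₁.conic_act g⁻¹ y hyV z hzV p q hp.le hq.le
    have h6 : τ g⁻¹ ((L (τ g x))⁻¹ • τ g x) = (L (τ g x))⁻¹ • x := by
      rw [hrep₁.act_smul g⁻¹ hτx (inv_nonneg.mpr hℓ.le), hrep₁.act_inv_act g hxV]
    have h7 : (L (τ g x))⁻¹ • x = p • τ g⁻¹ y + q • τ g⁻¹ z := by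
      rw [← h6, ← h5, heq]
    have h8 : x = (L (τ g x) * p) • τ g⁻¹ y + (L (τ g x) * q) • τ g⁻¹ z := by
      have h8a := congrArg (fun v => L (τ g x) • v) h7
      rw [smul_inv_smul₀ (ne_of_gt hℓ)] at h8a
      conv_lhs => rw [h8a]
      rw [smul_add, smul_smul, smul_smul]
    have hαpos : 0 < L (τ g x) * p * L (τ g⁻¹ y) := mul_pos (mul_pos hℓ hp) hLu
    have hβpos : 0 < L (τ g x) * q * L (τ g⁻¹ z) := mul_pos (mul_pos hℓ hq) hLw
    have h9 : x = (L (τ g x) * p * L (τ g⁻¹ y)) • ((L (τ g⁻¹ y))⁻¹ • τ g⁻¹ y)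
        + (L (τ g x) * q * L (τ g⁻¹ z)) • ((L (τ g⁻¹ z))⁻¹ • τ g⁻¹ z) := by
      conv_lhs => rw [h8]
      rw [smul_smul, smul_smul, mul_assoc (L (τ g x) * p), mul_inv_cancel₀ (ne_of_gt hLu),
        mul_one, mul_assoc (L (τ g x) * q), mul_inv_cancel₀ (ne_of_gt hLw), mul_one]
    have h10 : L (τ g x) * p * L (τ g⁻¹ y) + L (τ g x) * q * L (τ g⁻¹ z) = 1 := by
      have hx1 : L x = 1 := hsec.L_one hxQ
      have h10a : L x = L (τ g x) * p * L (τ g⁻¹ y) * L ((L (τ g⁻¹ y))⁻¹ • τ g⁻¹ y)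
          + L (τ g x) * q * L (τ g⁻¹ z) * L ((L (τ g⁻¹ z))⁻¹ • τ g⁻¹ z) := by
        calc L x = L ((L (τ g x) * p * L (τ g⁻¹ y)) • ((L (τ g⁻¹ y))⁻¹ • τ g⁻¹ y)
            + (L (τ g x) * q * L (τ g⁻¹ z)) • ((L (τ g⁻¹ z))⁻¹ • τ g⁻¹ z)) := by rw [← h9]
          _ = _ := by
            rw [hsec.map_add _ (cone_smul_mem hrep₁.cone (hQsub huQ) hαpos.le)
                _ (cone_smul_mem hrep₁.cone (hQsub hwQ) hβpos.le),
              hsec.map_smul _ (hQsub huQ) _ hαpos.le, hsec.map_smul _ (hQsub hwQ) _ hβpos.le]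
      rw [hsec.L_one huQ, hsec.L_one hwQ, mul_one, mul_one] at h10a
      rw [← h10a, hx1]
    have h11 := hxext _ huQ _ hwQ ⟨_, _, hαpos, hβpos, h10, h9.symm⟩
    constructor
    · -- y = (L (τ g x))⁻¹ • τ g x
      have hu' : τ g⁻¹ y = L (τ g⁻¹ y) • x := by
        rw [← h11.1, hueq]
      have hy' : y = L (τ g⁻¹ y) • τ g x := by
        calc y = τ g (τ g⁻¹ y) := (hrep₁.act_act_inv g hyV).symm
          _ = τ g (L (τ g⁻¹ y) • x) := by conv_lhs => rw [hu']
          _ = L (τ g⁻¹ y) • τ g x := hrep₁.act_smul g hxV hLu.le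
      have hLy : L (τ g⁻¹ y) * L (τ g x) = 1 := by
        have h12 : L y = 1 := hsec.L_one hy
        rw [hy', hsec.map_smul _ hτx _ hLu.le] at h12
        exact h12
      rw [hy', eq_inv_of_mul_eq_one_left hLy]
    · have hw' : τ g⁻¹ z = L (τ g⁻¹ z) • x := by
        rw [← h11.2, hweq]
      have hz' : z = L (τ g⁻¹ z) • τ g x := by
        calc z = τ g (τ g⁻¹ z) := (hrep₁.act_act_inv g hzV).symm
          _ = τ g (L (τ g⁻¹ z) • x) := by conv_lhs => rw [hw']
          _ = L (τ g⁻¹ z) • τ g x := hrep₁.act_smul g hxV hLw.le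
      have hLz : L (τ g⁻¹ z) * L (τ g x) = 1 := by
        have h12 : L z = 1 := hsec.L_one hz
        rw [hz', hsec.map_smul _ hτx _ hLw.le] at h12
        exact h12
      rw [hz', eq_inv_of_mul_eq_one_left hLz]
  -- closure of extreme points invariant
  have hρE' : ∀ g : G, ∀ x ∈ closure (Q.extremePoints ℝ),
      (L (τ g x))⁻¹ • τ g x ∈ closure (Q.extremePoints ℝ) := by
    intro g x hx
    have hcont : ContinuousOn (fun x => (L (τ g x))⁻¹ • τ g x) Q := by
      have h1 : ContinuousOn (fun x => L (τ g x)) Q :=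
        hsec.continuousOn.comp ((hrep₁.act_continuousOn g).mono hQsub)
          (fun x hx => hrep₁.mapsTo g (hQsub hx))
      have h2 : ∀ x ∈ Q, L (τ g x) ≠ 0 := fun x hx =>
        ne_of_gt (hsec.pos _ (hrep₁.mapsTo g (hQsub hx))
          (hrep₁.act_ne_zero g (hQsub hx) (hsec.ne_zero_of_mem_Q h0V₁ hx)))
      exact (h1.inv₀ h2).smul ((hrep₁.act_continuousOn g).mono hQsub)
    have himg : (fun x => (L (τ g x))⁻¹ • τ g x) '' closure (Q.extremePoints ℝ)
        ⊆ closure (Q.extremePoints ℝ) := by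
      calc (fun x => (L (τ g x))⁻¹ • τ g x) '' closure (Q.extremePoints ℝ)
          ⊆ closure ((fun x => (L (τ g x))⁻¹ • τ g x) '' (Q.extremePoints ℝ)) :=
            ContinuousOn.image_closure (hcont.mono hE'Q)
        _ ⊆ closure (Q.extremePoints ℝ) := closure_mono (by
            rintro _ ⟨x, hx, rfl⟩
            exact hρext g x hx)
    exact himg ⟨x, hx, rfl⟩
  -- the set where φ₂ = a • φ₁, intersected with the closure of extreme points
  have hfcont : ContinuousOn (fun x => φ₂ x - a • φ₁ x) V₁ :=
    hφ₂.continuousOn.sub (continuousOn_const.smul hφ₁.continuousOn)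
  set D : Set X₁ := closure (Q.extremePoints ℝ) ∩ (fun x => φ₂ x - a • φ₁ x) ⁻¹' {0} with hDdef
  have hDclosed : IsClosed D :=
    (hfcont.mono (hE'Q.trans hQsub)).preimage_isClosed_of_isClosed isClosed_closure
      isClosed_singleton
  have hxsD : xs ∈ D := by
    refine ⟨hxsE', ?_⟩
    simp only [mem_preimage, mem_singleton_iff]
    rw [haxs, sub_self]
  have hDinv : ∀ g : G, ∀ x ∈ D, (L (τ g x))⁻¹ • τ g x ∈ D := by
    rintro g x ⟨hxE', hxf⟩
    have hxQ := hE'Q hxE'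
    have hxV := hQsub hxQ
    have hprop : φ₂ x = a • φ₁ x := by
      have h13 : φ₂ x - a • φ₁ x = 0 := by simpa using hxf
      exact sub_eq_zero.mp h13
    refine ⟨hρE' g x hxE', ?_⟩
    have hτx := hrep₁.mapsTo g hxV
    have hinv : (0:ℝ) ≤ (L (τ g x))⁻¹ := inv_nonneg.mpr (hsec.nonneg _ hτx)
    have e1 : φ₂ ((L (τ g x))⁻¹ • τ g x) = (L (τ g x))⁻¹ • η g (φ₂ x) := by
      rw [hφ₂.map_smul' h0V₁ hτx hinv, hφ₂.equivariant g x hxV]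
    have e2 : φ₁ ((L (τ g x))⁻¹ • τ g x) = (L (τ g x))⁻¹ • η g (φ₁ x) := by
      rw [hφ₁.map_smul' h0V₁ hτx hinv, hφ₁.equivariant g x hxV]
    have e3 : η g (φ₂ x) = a • η g (φ₁ x) := by
      rw [hprop]
      exact hrep₂.act_smul g (hφ₁.mapsTo hxV) hapos.le
    simp only [mem_preimage, mem_singleton_iff]
    rw [e1, e2, e3, smul_comm, sub_self]
  -- minimality: D contains the closure of the extreme points
  have hED : closure (Q.extremePoints ℝ) ⊆ D := by
    have horb : {y | ∃ g : G, y = (L (τ g xs))⁻¹ • τ g xs} ⊆ D := by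
      rintro y ⟨g, rfl⟩
      exact hDinv g xs hxsD
    exact (hmin xs hxsE').trans (closure_minimal horb hDclosed)
  -- extension to Q by Krein-Milman
  set Z : Set X₁ := Q ∩ (fun x => φ₂ x - a • φ₁ x) ⁻¹' {0} with hZdef
  have hZclosed : IsClosed Z :=
    (hfcont.mono hQsub).preimage_isClosed_of_isClosed hQcomp.isClosed isClosed_singleton
  have hZprop : ∀ x ∈ Z, φ₂ x = a • φ₁ x := by
    rintro x ⟨-, hxf⟩
    have h13 : φ₂ x - a • φ₁ x = 0 := by simpa using hxf
    exact sub_eq_zero.mp h13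
  have hZconv : Convex ℝ Z := by
    intro x hx y hy p q hp hq hpq
    have hxQ := hx.1
    have hyQ := hy.1
    have hxV := hQsub hxQ
    have hyV := hQsub hyQ
    have hxf := hZprop x hx
    have hyf := hZprop y hy
    refine ⟨hQconv hxQ hyQ hp hq hpq, ?_⟩
    simp only [mem_preimage, mem_singleton_iff]
    rw [hφ₂.conic x hxV y hyV p q hp hq, hφ₁.conic x hxV y hyV p q hp hq, hxf, hyf,
      smul_add, smul_comm a p, smul_comm a q, sub_self]
  have hextZ : Q.extremePoints ℝ ⊆ Z := by
    intro x hx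
    have hxD : x ∈ D := hED (subset_closure hx)
    exact ⟨extremePoints_subset hx, hxD.2⟩
  have hQZ : Q ⊆ Z := by
    have hKM := closure_convexHull_extremePoints' hQcomp hQconv
    rw [← hKM]
    exact closure_minimal (convexHull_min hextZ hZconv) hZclosed
  -- conclusion
  refine ⟨a, hapos, ?_⟩
  intro x hx
  by_cases hx0 : x = 0
  · rw [hx0, hφ₁.map_zero' h0V₁, hφ₂.map_zero' h0V₁, smul_zero]
  · obtain ⟨hLpos, hxQ', hxeq'⟩ := hsec.normalize hrep₁.cone hx hx0
    have hxZ : (L x)⁻¹ • x ∈ Z := hQZ hxQ'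
    have hxprop : φ₂ ((L x)⁻¹ • x) = a • φ₁ ((L x)⁻¹ • x) := hZprop _ hxZ
    have hxV' : (L x)⁻¹ • x ∈ V₁ := hQsub hxQ'
    calc φ₂ x = φ₂ (L x • ((L x)⁻¹ • x)) := by rw [hxeq']
      _ = L x • φ₂ ((L x)⁻¹ • x) := hφ₂.map_smul' h0V₁ hxV' hLpos.le
      _ = L x • (a • φ₁ ((L x)⁻¹ • x)) := by rw [hxprop]
      _ = a • (L x • φ₁ ((L x)⁻¹ • x)) := smul_comm _ _ _
      _ = a • φ₁ (L x • ((L x)⁻¹ • x)) := by rw [hφ₁.map_smul' h0V₁ hxV' hLpos.le]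
      _ = a • φ₁ x := by rw [hxeq']
end

section
/- Let (G,V,τ) be an irreducible conic representation of a topological group G and let Q₁ and Q₂ be two G-invariant compact sections of V. Then Q₂ = a·Q₁ = {a·x : x ∈ Q₁} for some real number a > 0; in particular Q₁ and Q₂ are isomorphic as affine representations of G. -/
open Set

open Filter Topology

/-- A subcone with a gauge `L` whose unit level set is compact is closed. -/
lemma closed_of_compact_slice {X : Type*} [AddCommGroup X] [Module ℝ X] [TopologicalSpace X]
    [IsTopologicalAddGroup X] [ContinuousSMul ℝ X] [T2Space X]
    (W : Set X) (L : X → ℝ)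
    (hpos : ∀ x ∈ W, x ≠ 0 → 0 < L x)
    (hnn : ∀ x ∈ W, 0 ≤ L x)
    (hsmul : ∀ x ∈ W, ∀ a : ℝ, 0 ≤ a → a • x ∈ W)
    (hLsmul : ∀ x ∈ W, ∀ a : ℝ, 0 ≤ a → L (a • x) = a * L x)
    (h0 : (0:X) ∈ W)
    (hK : IsCompact (W ∩ {x | L x = 1})) :
    IsClosed W := by
  apply isClosed_of_closure_subset
  intro y hy
  obtain ⟨u, huW, hu⟩ := mem_closure_iff_ultrafilter.mp hy
  have hidy : Tendsto id (↑u) (𝓝 y) := hu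
  by_cases hz : ({0} : Set X) ∈ u
  · have h0' : Tendsto id (↑u) (𝓝 (0:X)) := by
      intro s hs
      exact mem_of_superset hz (by simpa using mem_of_mem_nhds hs)
    have : y = 0 := tendsto_nhds_unique hidy h0'
    rw [this]; exact h0
  · have hWz : W \ {0} ∈ u := by
      have : ({0} : Set X)ᶜ ∈ u := (Ultrafilter.compl_mem_iff_notMem).mpr hz
      exact inter_mem huW this
    set p : X → X := fun x => (L x)⁻¹ • x with hp
    set K := W ∩ {x | L x = 1} with hKdef
    have hmaps : ∀ x ∈ W \ {0}, p x ∈ K := by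
      intro x hx
      have hLx : 0 < L x := hpos x hx.1 hx.2
      refine ⟨hsmul x hx.1 _ (by positivity), ?_⟩
      show L ((L x)⁻¹ • x) = 1
      rw [hLsmul x hx.1 _ (by positivity), inv_mul_cancel₀ hLx.ne']
    have hKu : K ∈ Ultrafilter.map p u := by
      rw [Ultrafilter.mem_map]
      exact mem_of_superset hWz (fun x hx => hmaps x hx)
    obtain ⟨q, hqK, hq⟩ := hK.ultrafilter_le_nhds (Ultrafilter.map p u)
      (le_principal_iff.mpr hKu)
    have hq' : Tendsto p (↑u) (𝓝 q) := hq
    have hL0 : L 0 = 0 := by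
      have := hLsmul 0 h0 0 le_rfl
      simpa using this
    have hqne : q ≠ 0 := by
      intro h; rw [h] at hqK
      have : L (0:X) = 1 := hqK.2
      rw [hL0] at this; norm_num at this
    by_cases hb : ∃ M : ℝ, {x | L x ≤ M} ∈ u
    · obtain ⟨M, hM⟩ := hb
      have hIcc : Icc (0:ℝ) M ∈ Ultrafilter.map L u := by
        rw [Ultrafilter.mem_map]
        refine mem_of_superset (inter_mem huW hM) ?_
        intro x hx; exact ⟨hnn x hx.1, hx.2⟩
      obtain ⟨t, htI, ht⟩ := isCompact_Icc.ultrafilter_le_nhds (Ultrafilter.map L u)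
        (le_principal_iff.mpr hIcc)
      have ht' : Tendsto L (↑u) (𝓝 t) := ht
      have hsm : Tendsto (fun x => L x • p x) (↑u) (𝓝 (t • q)) := ht'.smul hq'
      have heq : (fun x => L x • p x) =ᶠ[↑u] id := by
        filter_upwards [hWz] with x hx
        have hLx : 0 < L x := hpos x hx.1 hx.2
        show L x • ((L x)⁻¹ • x) = x
        rw [smul_smul, mul_inv_cancel₀ hLx.ne', one_smul]
      have : Tendsto id (↑u) (𝓝 (t • q)) := hsm.congr' heq
      have hy' : y = t • q := tendsto_nhds_unique hidy this
      rw [hy']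
      exact hsmul q hqK.1 t htI.1
    · push_neg at hb
      have htop : Tendsto L (↑u) atTop := by
        refine tendsto_atTop.2 fun b => ?_
        have : {x | L x ≤ b}ᶜ ∈ u := (Ultrafilter.compl_mem_iff_notMem).mpr (hb b)
        exact mem_of_superset this (fun x hx => le_of_lt (not_le.mp (by simpa using hx)))
      have hinv : Tendsto (fun x => (L x)⁻¹) (↑u) (𝓝 0) := htop.inv_tendsto_atTop
      have : Tendsto p (↑u) (𝓝 ((0:ℝ) • y)) := hinv.smul hidy
      rw [zero_smul] at this
      exact absurd (tendsto_nhds_unique hq' this) hqne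

lemma compact_slice {X : Type*} [TopologicalSpace X] [T2Space X] (Q : Set X) (hQ : IsCompact Q)
    (f : X → ℝ) (hf : ContinuousOn f Q) : IsCompact {x ∈ Q | f x = 0} := by
  have h1 : IsCompact ((fun x => (x, f x)) '' Q) :=
    hQ.image_of_continuousOn (continuousOn_id.prodMk hf)
  have h2 : IsCompact (((fun x => (x, f x)) '' Q) ∩ {p : X × ℝ | p.2 = 0}) :=
    h1.inter_right (isClosed_eq continuous_snd continuous_const)
  have h3 := h2.image continuous_fst
  convert h3 using 1
  ext x
  constructor
  · rintro ⟨hxQ, hfx⟩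
    exact ⟨(x, f x), ⟨⟨x, hxQ, rfl⟩, hfx⟩, rfl⟩
  · rintro ⟨p, ⟨⟨z, hzQ, rfl⟩, hp2⟩, rfl⟩
    exact ⟨hzQ, hp2⟩

/-- Let `(G,V,τ)` be an irreducible conic representation of a topological
group `G` and let `Q₁` and `Q₂` be two `G`-invariant compact sections of `V`.  Then
`Q₂ = a·Q₁ = {a·x : x ∈ Q₁}` for some real number `a > 0`; in particular the scaling
`x ↦ a • x` intertwines the (affine) actions of `G` on `Q₁` and `Q₂`, so `Q₁` and `Q₂` are
isomorphic as affine representations of `G`. -/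
theorem stmt_13 {G X : Type*} [Group G] [TopologicalSpace G] [IsTopologicalGroup G]
    [AddCommGroup X] [Module ℝ X] [TopologicalSpace X]
    [IsTopologicalAddGroup X] [ContinuousSMul ℝ X] [T2Space X] [SeparatingDual ℝ X]
    (V : Set X) (τ : G → X → X) (hrep : IsConicRep G V τ)
    (hirr : IsIrreducibleConicRep G V τ)
    (L₁ : X → ℝ) (Q₁ : Set X) (hsec₁ : IsConicSection V L₁ Q₁) (hQ₁comp : IsCompact Q₁)
    (hQ₁inv : ∀ g : G, MapsTo (τ g) Q₁ Q₁)
    (L₂ : X → ℝ) (Q₂ : Set X) (hsec₂ : IsConicSection V L₂ Q₂) (hQ₂comp : IsCompact Q₂)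
    (hQ₂inv : ∀ g : G, MapsTo (τ g) Q₂ Q₂) :
    ∃ a : ℝ, 0 < a ∧ Q₂ = (fun x => a • x) '' Q₁ ∧
      ∀ g : G, ∀ x ∈ Q₁, τ g (a • x) = a • τ g x := by
  -- basic facts
  obtain ⟨w, hwV⟩ := hrep.nonempty
  have h0V : (0:X) ∈ V := by
    have := hrep.cone w hwV w hwV 0 0 le_rfl le_rfl
    simpa using this
  have hVsmul : ∀ x ∈ V, ∀ a : ℝ, 0 ≤ a → a • x ∈ V := by
    intro x hx a ha
    have := hrep.cone x hx x hx a 0 ha le_rfl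
    simpa using this
  have hτ0 : ∀ g : G, τ g 0 = 0 := by
    intro g
    have := hrep.conic_act g 0 h0V 0 h0V 0 0 le_rfl le_rfl
    simpa using this
  have hL₁0 : L₁ 0 = 0 := by
    have := hsec₁.map_smul 0 h0V 0 le_rfl
    simpa using this
  have hL₂0 : L₂ 0 = 0 := by
    have := hsec₂.map_smul 0 h0V 0 le_rfl
    simpa using this
  have hQ₁V : Q₁ ⊆ V := by rw [hsec₁.sect_eq]; exact fun x hx => hx.1
  have hne : ∃ x ∈ V, x ≠ 0 := by
    by_contra h
    push_neg at h
    exact hrep.ne_zero (Subset.antisymm (fun x hx => h x hx) (by simpa using h0V))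
  have hQ₁ne : Q₁.Nonempty := by
    obtain ⟨x, hxV, hx0⟩ := hne
    have hLx : 0 < L₁ x := hsec₁.pos x hxV hx0
    refine ⟨(L₁ x)⁻¹ • x, ?_⟩
    rw [hsec₁.sect_eq]
    refine ⟨hVsmul x hxV _ (by positivity), ?_⟩
    show L₁ ((L₁ x)⁻¹ • x) = 1
    rw [hsec₁.map_smul x hxV _ (by positivity), inv_mul_cancel₀ hLx.ne']
  -- invariance of sections' gauges under the action
  have key : ∀ (L : X → ℝ) (Q : Set X), IsConicSection V L Q → (∀ g, MapsTo (τ g) Q Q) →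
      ∀ g : G, ∀ x ∈ V, L (τ g x) = L x := by
    intro L Q hsec hQinv g x hxV
    by_cases hx0 : x = 0
    · rw [hx0, hτ0 g]
    · have hLx : 0 < L x := hsec.pos x hxV hx0
      set x' := (L x)⁻¹ • x with hx'def
      have hx'V : x' ∈ V := hVsmul x hxV _ (by positivity)
      have hx'Q : x' ∈ Q := by
        rw [hsec.sect_eq]
        exact ⟨hx'V, by rw [hx'def, hsec.map_smul x hxV _ (by positivity),
          inv_mul_cancel₀ hLx.ne']⟩
      have hτx'Q : τ g x' ∈ Q := hQinv g hx'Q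
      have hτx'V : τ g x' ∈ V := by rw [hsec.sect_eq] at hτx'Q; exact hτx'Q.1
      have hτx'L : L (τ g x') = 1 := by rw [hsec.sect_eq] at hτx'Q; exact hτx'Q.2
      have hx_eq : x = L x • x' + (0:ℝ) • x' := by
        rw [hx'def, smul_smul, mul_inv_cancel₀ hLx.ne', one_smul, zero_smul, add_zero]
      have := hrep.conic_act g x' hx'V x' hx'V (L x) 0 hLx.le le_rfl
      rw [← hx_eq, zero_smul, add_zero] at this
      rw [this, hsec.map_smul _ hτx'V _ hLx.le, hτx'L, mul_one]
  have hinv₁ := key L₁ Q₁ hsec₁ hQ₁inv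
  have hinv₂ := key L₂ Q₂ hsec₂ hQ₂inv
  -- the minimum of L₂ on Q₁
  obtain ⟨x₀, hx₀Q, hx₀min⟩ :=
    hQ₁comp.exists_isMinOn hQ₁ne (hsec₂.continuousOn.mono hQ₁V)
  set c : ℝ := L₂ x₀ with hcdef
  have hx₀V : x₀ ∈ V := hQ₁V hx₀Q
  have hx₀L₁ : L₁ x₀ = 1 := by rw [hsec₁.sect_eq] at hx₀Q; exact hx₀Q.2
  have hx₀ne : x₀ ≠ 0 := by intro h; rw [h, hL₁0] at hx₀L₁; norm_num at hx₀L₁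
  have hc : 0 < c := hsec₂.pos x₀ hx₀V hx₀ne
  -- the invariant subcone
  set W : Set X := {x ∈ V | L₂ x = c * L₁ x} with hWdef
  have hWsmul : ∀ x ∈ W, ∀ a : ℝ, 0 ≤ a → a • x ∈ W := by
    rintro x ⟨hxV, hxL⟩ a ha
    refine ⟨hVsmul x hxV a ha, ?_⟩
    rw [hsec₂.map_smul x hxV a ha, hsec₁.map_smul x hxV a ha, hxL]; ring
  have h0W : (0:X) ∈ W := ⟨h0V, by rw [hL₁0, hL₂0, mul_zero]⟩
  have hWK : W ∩ {x | L₁ x = 1} = {x ∈ Q₁ | L₂ x - c * L₁ x = 0} := by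
    ext x
    simp only [hWdef, hsec₁.sect_eq, mem_inter_iff, mem_setOf_eq, mem_sep_iff, sub_eq_zero]
    tauto
  have hWclosed : IsClosed W := by
    apply closed_of_compact_slice W L₁
    · exact fun x hx hx0 => hsec₁.pos x hx.1 hx0
    · exact fun x hx => hsec₁.nonneg x hx.1
    · exact hWsmul
    · exact fun x hx a ha => hsec₁.map_smul x hx.1 a ha
    · exact h0W
    · rw [hWK]
      exact compact_slice Q₁ hQ₁comp _
        (((hsec₂.continuousOn.mono hQ₁V).sub
          ((continuousOn_const).mul (hsec₁.continuousOn.mono hQ₁V))))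
  have hWV : W = V := by
    apply hirr W (fun x hx => hx.1) ⟨x₀, hx₀V, by rw [hx₀L₁, mul_one]⟩
    · intro h
      exact hx₀ne (by rw [← mem_singleton_iff, ← h]; exact ⟨hx₀V, by rw [hx₀L₁, mul_one]⟩)
    · exact hWclosed
    · rintro x ⟨hxV, hxL⟩ y ⟨hyV, hyL⟩ a b ha hb
      have haxV : a • x ∈ V := hVsmul x hxV a ha
      have hbyV : b • y ∈ V := hVsmul y hyV b hb
      refine ⟨hrep.cone x hxV y hyV a b ha hb, ?_⟩
      rw [hsec₂.map_add _ haxV _ hbyV, hsec₁.map_add _ haxV _ hbyV,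
        hsec₂.map_smul x hxV a ha, hsec₂.map_smul y hyV b hb,
        hsec₁.map_smul x hxV a ha, hsec₁.map_smul y hyV b hb, hxL, hyL]
      ring
    · intro g x hx
      exact ⟨hrep.mapsTo g hx.1, by rw [hinv₂ g x hx.1, hinv₁ g x hx.1, hx.2]⟩
  have hLeq : ∀ x ∈ V, L₂ x = c * L₁ x := by
    intro x hx
    have : x ∈ W := by rw [hWV]; exact hx
    exact this.2
  -- conclusion
  refine ⟨c⁻¹, by positivity, ?_, ?_⟩
  · ext y
    rw [hsec₂.sect_eq]
    constructor
    · rintro ⟨hyV, hyL⟩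
      have hL₁y : L₁ y = c⁻¹ := by
        have := hLeq y hyV
        rw [hyL] at this
        field_simp
        linarith
      refine ⟨c • y, ?_, ?_⟩
      · rw [hsec₁.sect_eq]
        exact ⟨hVsmul y hyV c hc.le,
          by rw [hsec₁.map_smul y hyV c hc.le, hL₁y, mul_inv_cancel₀ hc.ne']⟩
      · show c⁻¹ • c • y = y
        rw [smul_smul, inv_mul_cancel₀ hc.ne', one_smul]
    · rintro ⟨x, hxQ, rfl⟩
      have hxV : x ∈ V := hQ₁V hxQ
      have hxL₁ : L₁ x = 1 := by rw [hsec₁.sect_eq] at hxQ; exact hxQ.2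
      refine ⟨hVsmul x hxV _ (by positivity), ?_⟩
      show L₂ (c⁻¹ • x) = 1
      rw [hsec₂.map_smul x hxV _ (by positivity), hLeq x hxV, hxL₁, mul_one,
        inv_mul_cancel₀ hc.ne']
  · intro g x hxQ
    have hxV : x ∈ V := hQ₁V hxQ
    have := hrep.conic_act g x hxV x hxV c⁻¹ 0 (by positivity) le_rfl
    simpa using this
end

section
/- Let (V',η) be a degenerate conic representation of a topological group G, let φ : (V',η) → (V,τ) be a surjective homomorphism of conic representations, and let Q be a compact section of V with induced multiplier σ. Then there exist real numbers 0 < a < b such that a < σ(g,x) < b for all g ∈ G and x ∈ Q. -/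
open Set

/-- Let `(V',η)` be a degenerate conic representation of a topological group
`G`, let `φ : (V',η) → (V,τ)` be a surjective homomorphism of conic representations, and let
`Q` be a compact section of `V` with induced multiplier `σ(g,x) = L(τ_g x)`.  Then there exist
real numbers `0 < a < b` such that `a < σ(g,x) < b` for all `g ∈ G` and `x ∈ Q`. -/
theorem stmt_14 {G X' X : Type*} [Group G] [TopologicalSpace G] [IsTopologicalGroup G]
    [AddCommGroup X'] [Module ℝ X'] [TopologicalSpace X']
    [IsTopologicalAddGroup X'] [ContinuousSMul ℝ X'] [T2Space X'] [SeparatingDual ℝ X']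
    [AddCommGroup X] [Module ℝ X] [TopologicalSpace X]
    [IsTopologicalAddGroup X] [ContinuousSMul ℝ X] [T2Space X] [SeparatingDual ℝ X]
    (V' : Set X') (η : G → X' → X') (hrep' : IsConicRep G V' η)
    (hdeg : IsDegenerateConicRep G V' η)
    (V : Set X) (τ : G → X → X) (hrep : IsConicRep G V τ)
    (φ : X' → X) (hφ : IsConicHom G V' η V τ φ) (hφsurj : φ '' V' = V)
    (L : X → ℝ) (Q : Set X) (hsec : IsConicSection V L Q) (hQcomp : IsCompact Q) :
    ∃ a b : ℝ, 0 < a ∧ a < b ∧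
      ∀ g : G, ∀ x ∈ Q, a < L (τ g x) ∧ L (τ g x) < b := by
  classical
  obtain ⟨x₀, hx₀⟩ := hrep'.nonempty
  have zeroV' : (0 : X') ∈ V' := by
    have := hrep'.cone x₀ hx₀ x₀ hx₀ 0 0 le_rfl le_rfl
    simpa using this
  obtain ⟨w₀, hw₀⟩ := hrep.nonempty
  have zeroV : (0 : X) ∈ V := by
    have := hrep.cone w₀ hw₀ w₀ hw₀ 0 0 le_rfl le_rfl
    simpa using this
  have hφsmul : ∀ z ∈ V', ∀ a : ℝ, 0 ≤ a → φ (a • z) = a • φ z := by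
    intro z hz a ha
    have := hφ.conic z hz 0 zeroV' a 0 ha le_rfl
    simpa using this
  have hφ0 : φ (0 : X') = 0 := by
    have := hφsmul 0 zeroV' 0 le_rfl
    simpa using this
  have hηsmul : ∀ g : G, ∀ z ∈ V', ∀ a : ℝ, 0 ≤ a → η g (a • z) = a • η g z := by
    intro g z hz a ha
    have := hrep'.conic_act g z hz 0 zeroV' a 0 ha le_rfl
    simpa using this
  have hη0 : ∀ g : G, η g (0 : X') = 0 := by
    intro g
    have := hηsmul g 0 zeroV' 0 le_rfl
    simpa using this
  have hηne : ∀ g : G, ∀ z ∈ V', z ≠ 0 → η g z ≠ 0 := by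
    intro g z hz hzne h0
    have h1 : η g⁻¹ (η g z) = z := by
      rw [← hrep'.act_mul g⁻¹ g z hz, inv_mul_cancel, hrep'.act_one z hz]
    rw [h0, hη0] at h1
    exact hzne h1.symm
  obtain ⟨L₀, Q₀, hsec₀, hQ₀⟩ := hrep'.exists_compact_section
  obtain ⟨L', Q', hsec', hinv⟩ := hdeg
  set f : X' → ℝ := fun z => L (φ z) with hfdef
  have hfcont : ContinuousOn f V' :=
    hsec.continuousOn.comp hφ.continuousOn hφ.mapsTo
  have hfsmul : ∀ z ∈ V', ∀ a : ℝ, 0 ≤ a → f (a • z) = a * f z := by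
    intro z hz a ha
    simp only [hfdef, hφsmul z hz a ha]
    exact hsec.map_smul (φ z) (hφ.mapsTo hz) a ha
  have hfpos : ∀ z ∈ V', z ≠ 0 → 0 < f z :=
    fun z hz hzne => hsec.pos (φ z) (hφ.mapsTo hz) (hφ.ne_zero z hz hzne)
  have hL'smul := hsec'.map_smul
  have hL'pos := hsec'.pos
  have hL₀0 : L₀ (0 : X') = 0 := by
    have := hsec₀.map_smul 0 zeroV' 0 le_rfl
    simpa using this
  obtain ⟨u, huV, hune⟩ : ∃ u ∈ V', u ≠ 0 := by
    by_contra h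
    push_neg at h
    exact hrep'.ne_zero (Set.eq_singleton_iff_nonempty_unique_mem.mpr ⟨hrep'.nonempty, h⟩)
  have hL₀u : 0 < L₀ u := hsec₀.pos u huV hune
  have hQ₀ne : Q₀.Nonempty := by
    refine ⟨(L₀ u)⁻¹ • u, ?_⟩
    have hmem : (L₀ u)⁻¹ • u ∈ V' := by
      have := hrep'.cone u huV u huV (L₀ u)⁻¹ 0 (by positivity) le_rfl
      simpa using this
    rw [hsec₀.sect_eq]
    refine ⟨hmem, ?_⟩
    rw [hsec₀.map_smul u huV (L₀ u)⁻¹ (by positivity)]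
    field_simp
  have hQ₀sub : Q₀ ⊆ V' := by
    rw [hsec₀.sect_eq]; exact fun z hz => hz.1
  have hQ₀ne0 : ∀ z ∈ Q₀, z ≠ 0 := by
    intro z hz h0
    rw [hsec₀.sect_eq] at hz
    have h1 : L₀ z = 1 := hz.2
    rw [h0, hL₀0] at h1
    exact zero_ne_one h1
  obtain ⟨zm, hzm, hzmin⟩ := hQ₀.exists_isMinOn hQ₀ne (hfcont.mono hQ₀sub)
  obtain ⟨zM, hzM, hzmax⟩ := hQ₀.exists_isMaxOn hQ₀ne (hfcont.mono hQ₀sub)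
  obtain ⟨wm, hwm, hwmin⟩ := hQ₀.exists_isMinOn hQ₀ne (hsec'.continuousOn.mono hQ₀sub)
  obtain ⟨wM, hwM, hwmax⟩ := hQ₀.exists_isMaxOn hQ₀ne (hsec'.continuousOn.mono hQ₀sub)
  set m := f zm with hmdef
  set M := f zM with hMdef
  set m' := L' wm with hm'def
  set M' := L' wM with hM'def
  have hmpos : 0 < m := hfpos zm (hQ₀sub hzm) (hQ₀ne0 zm hzm)
  have hm'pos : 0 < m' := hL'pos wm (hQ₀sub hwm) (hQ₀ne0 wm hwm)
  have hmM : m ≤ M := hzmin hzM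
  have hm'M' : m' ≤ M' := hwmin hwM
  have hMpos : 0 < M := lt_of_lt_of_le hmpos hmM
  have hM'pos : 0 < M' := lt_of_lt_of_le hm'pos hm'M'
  have hbound : ∀ z ∈ V', z ≠ 0 → (m * L₀ z ≤ f z ∧ f z ≤ M * L₀ z) ∧
      (m' * L₀ z ≤ L' z ∧ L' z ≤ M' * L₀ z) := by
    intro z hz hzne
    have hLz : 0 < L₀ z := hsec₀.pos z hz hzne
    have hz₀mem : (L₀ z)⁻¹ • z ∈ V' := by
      have := hrep'.cone z hz z hz (L₀ z)⁻¹ 0 (by positivity) le_rfl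
      simpa using this
    have hz₀Q : (L₀ z)⁻¹ • z ∈ Q₀ := by
      rw [hsec₀.sect_eq]
      refine ⟨hz₀mem, ?_⟩
      rw [hsec₀.map_smul z hz (L₀ z)⁻¹ (by positivity)]
      field_simp
    have heq : (L₀ z) • ((L₀ z)⁻¹ • z) = z := by
      rw [smul_smul]; field_simp; exact one_smul ℝ z
    have hfz : f z = L₀ z * f ((L₀ z)⁻¹ • z) := by
      conv_lhs => rw [← heq]
      exact hfsmul _ hz₀mem (L₀ z) hLz.le
    have hL'z : L' z = L₀ z * L' ((L₀ z)⁻¹ • z) := by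
      conv_lhs => rw [← heq]
      exact hL'smul _ hz₀mem (L₀ z) hLz.le
    have h1 : m ≤ f ((L₀ z)⁻¹ • z) := hzmin hz₀Q
    have h2 : f ((L₀ z)⁻¹ • z) ≤ M := hzmax hz₀Q
    have h3 : m' ≤ L' ((L₀ z)⁻¹ • z) := hwmin hz₀Q
    have h4 : L' ((L₀ z)⁻¹ • z) ≤ M' := hwmax hz₀Q
    refine ⟨⟨?_, ?_⟩, ?_, ?_⟩
    · rw [hfz]; nlinarith
    · rw [hfz]; nlinarith
    · rw [hL'z]; nlinarith
    · rw [hL'z]; nlinarith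
  have hL'inv : ∀ g : G, ∀ z ∈ V', z ≠ 0 → L' (η g z) = L' z := by
    intro g z hz hzne
    have hc : 0 < L' z := hL'pos z hz hzne
    have hmem : (L' z)⁻¹ • z ∈ V' := by
      have := hrep'.cone z hz z hz (L' z)⁻¹ 0 (by positivity) le_rfl
      simpa using this
    have hQ' : (L' z)⁻¹ • z ∈ Q' := by
      rw [hsec'.sect_eq]
      refine ⟨hmem, ?_⟩
      rw [hL'smul z hz (L' z)⁻¹ (by positivity)]
      field_simp
    have h1 : η g ((L' z)⁻¹ • z) ∈ Q' := hinv g hQ'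
    rw [hsec'.sect_eq] at h1
    have h2 : η g ((L' z)⁻¹ • z) = (L' z)⁻¹ • η g z :=
      hηsmul g z hz (L' z)⁻¹ (by positivity)
    rw [h2] at h1
    have h3 : L' ((L' z)⁻¹ • η g z) = (L' z)⁻¹ * L' (η g z) :=
      hL'smul (η g z) (hrep'.mapsTo g hz) (L' z)⁻¹ (by positivity)
    have h5 : L' ((L' z)⁻¹ • η g z) = 1 := h1.2
    rw [h3] at h5
    field_simp at h5
    linarith
  refine ⟨m * m' / (M * M') / 2, 2 * (M * M' / (m * m')), by positivity, ?_, ?_⟩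
  · have h1 : m * m' / (M * M') ≤ 1 := by
      rw [div_le_one (by positivity)]
      exact mul_le_mul hmM hm'M' hm'pos.le hMpos.le
    have h2 : 1 ≤ M * M' / (m * m') := by
      rw [le_div_iff₀ (by positivity)]
      nlinarith [mul_le_mul hmM hm'M' hm'pos.le hMpos.le]
    linarith
  · intro g x hx
    rw [hsec.sect_eq] at hx
    obtain ⟨hxV, hLx⟩ := hx
    have hL00 : L (0 : X) = 0 := by
      have := hsec.map_smul 0 zeroV 0 le_rfl
      simpa using this
    have hxne : x ≠ 0 := by
      intro h0
      rw [h0, hL00] at hLx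
      exact one_ne_zero hLx.symm
    obtain ⟨y, hyV, hyx⟩ : ∃ y ∈ V', φ y = x := by
      have hmem : x ∈ φ '' V' := hφsurj ▸ hxV
      obtain ⟨y, hy, hyx⟩ := hmem
      exact ⟨y, hy, hyx⟩
    have hyne : y ≠ 0 := by
      intro h0; rw [h0, hφ0] at hyx; exact hxne hyx.symm
    have hfy : f y = 1 := by rw [hfdef]; simp only; rw [hyx]; exact hLx
    set z := η g y with hzdef
    have hzV : z ∈ V' := hrep'.mapsTo g hyV
    have hzne : z ≠ 0 := hηne g y hyV hyne
    have hφz : φ z = τ g x := by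
      rw [hzdef, hφ.equivariant g y hyV, hyx]
    have hσ : L (τ g x) = f z := by rw [hfdef]; simp only; rw [hφz]
    obtain ⟨⟨hfy1, hfy2⟩, ⟨hL'y1, hL'y2⟩⟩ := hbound y hyV hyne
    obtain ⟨⟨hfz1, hfz2⟩, ⟨hL'z1, hL'z2⟩⟩ := hbound z hzV hzne
    rw [hfy] at hfy1 hfy2
    have hL'eq : L' z = L' y := hL'inv g y hyV hyne
    rw [hL'eq] at hL'z1 hL'z2
    have hL₀y : 0 < L₀ y := hsec₀.pos y hyV hyne
    have hL₀z : 0 < L₀ z := hsec₀.pos z hzV hzne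
    rw [hσ]
    constructor
    · have key : m * m' ≤ f z * (M * M') := by
        calc m * m' = m * m' * 1 := by ring
          _ ≤ m * m' * (M * L₀ y) := by
              apply mul_le_mul_of_nonneg_left hfy2 (by positivity)
          _ = m * M * (m' * L₀ y) := by ring
          _ ≤ m * M * L' y := by
              apply mul_le_mul_of_nonneg_left hL'y1 (by positivity)
          _ ≤ m * M * (M' * L₀ z) := by
              apply mul_le_mul_of_nonneg_left hL'z2 (by positivity)
          _ = M * M' * (m * L₀ z) := by ring
          _ ≤ M * M' * f z := by
              apply mul_le_mul_of_nonneg_left hfz1 (by positivity)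
          _ = f z * (M * M') := by ring
      have h6 : m * m' / (M * M') ≤ f z := by
        rw [div_le_iff₀ (by positivity)]
        exact key
      have h7 : 0 < m * m' / (M * M') := by positivity
      linarith
    · have key : f z * (m * m') ≤ M * M' := by
        calc f z * (m * m') = m * m' * f z := by ring
          _ ≤ m * m' * (M * L₀ z) := by
              apply mul_le_mul_of_nonneg_left hfz2 (by positivity)
          _ = m * M * (m' * L₀ z) := by ring
          _ ≤ m * M * L' y := by
              apply mul_le_mul_of_nonneg_left hL'z1 (by positivity)
          _ ≤ m * M * (M' * L₀ y) := by
              apply mul_le_mul_of_nonneg_left hL'y2 (by positivity)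
          _ = M * M' * (m * L₀ y) := by ring
          _ ≤ M * M' * 1 := by
              apply mul_le_mul_of_nonneg_left hfy1 (by positivity)
          _ = M * M' := by ring
      have h6 : f z ≤ M * M' / (m * m') := by
        rw [le_div_iff₀ (by positivity)]
        exact key
      have h7 : 0 < M * M' / (m * m') := by positivity
      linarith
end

section
/- Let a : G → ℝ>0 be a nontrivial continuous group homomorphism from a topological group G to the multiplicative group of positive reals, and let (V,τ) be a conic representation of G admitting a compact section Q whose induced multiplier satisfies σ(g,x) = a(g) for all g ∈ G and x ∈ Q. Then there is no surjective homomorphism of conic representations from any degenerate conic representation of G onto (V,τ). -/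
open Set

private lemma coneSmulMem {X : Type*} [AddCommGroup X] [Module ℝ X] {V : Set X}
    (hc : ∀ x ∈ V, ∀ y ∈ V, ∀ a b : ℝ, 0 ≤ a → 0 ≤ b → a • x + b • y ∈ V)
    {x : X} (hx : x ∈ V) {c : ℝ} (hc0 : 0 ≤ c) : c • x ∈ V := by
  simpa using hc x hx x hx c 0 hc0 le_rfl

private lemma memSectionOfNe {X : Type*} [AddCommGroup X] [Module ℝ X] [TopologicalSpace X]
    {V Q : Set X} {L : X → ℝ}
    (hsec : IsConicSection V L Q)
    (hc : ∀ x ∈ V, ∀ y ∈ V, ∀ a b : ℝ, 0 ≤ a → 0 ≤ b → a • x + b • y ∈ V)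
    {x : X} (hx : x ∈ V) (hx0 : x ≠ 0) : (L x)⁻¹ • x ∈ Q := by
  have hp := hsec.pos x hx hx0
  have hmem : (L x)⁻¹ • x ∈ V := coneSmulMem hc hx (inv_pos.mpr hp).le
  rw [hsec.sect_eq]
  refine ⟨hmem, ?_⟩
  rw [hsec.map_smul x hx _ (inv_pos.mpr hp).le]
  field_simp

universe u

/-- Let `a : G → ℝ>0` be a nontrivial continuous group homomorphism from a
topological group `G` to the multiplicative group of positive reals, and let `(V,τ)` be a
conic representation of `G` admitting a compact section `Q` whose induced multiplier satisfies
`σ(g,x) = a(g)` for all `g ∈ G` and `x ∈ Q`.  Then there is no surjective homomorphism of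
conic representations from any degenerate conic representation of `G` onto `(V,τ)`. -/
theorem stmt_15 {G X : Type*} [Group G] [TopologicalSpace G] [IsTopologicalGroup G]
    [AddCommGroup X] [Module ℝ X] [TopologicalSpace X]
    [IsTopologicalAddGroup X] [ContinuousSMul ℝ X] [T2Space X] [SeparatingDual ℝ X]
    -- a nontrivial continuous homomorphism `a : G → ℝ>0`
    (a : G → ℝ) (hapos : ∀ g : G, 0 < a g) (hacont : Continuous a)
    (hahom : ∀ g h : G, a (g * h) = a g * a h) (hantriv : ∃ g : G, a g ≠ 1)
    -- a conic representation `(V,τ)` with a compact section `Q` whose multiplier is `a`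
    (V : Set X) (τ : G → X → X) (hrep : IsConicRep G V τ)
    (L : X → ℝ) (Q : Set X) (hsec : IsConicSection V L Q) (hQcomp : IsCompact Q)
    (hσ : ∀ g : G, ∀ x ∈ Q, L (τ g x) = a g) :
    ∀ (Y : Type u) [AddCommGroup Y] [Module ℝ Y] [TopologicalSpace Y]
      [IsTopologicalAddGroup Y] [ContinuousSMul ℝ Y] [T2Space Y] [SeparatingDual ℝ Y],
      ∀ (V' : Set Y) (η : G → Y → Y),
        IsConicRep G V' η → IsDegenerateConicRep G V' η →
        ∀ φ : Y → X, IsConicHom G V' η V τ φ → φ '' V' ≠ V := by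
  intro Y _ _ _ _ _ _ _ V' η hrep' hdeg φ hφ _heq
  obtain ⟨L', Q', hsec', hinvQ'⟩ := hdeg
  obtain ⟨L₀, Q₀, hsec₀, hcomp₀⟩ := hrep'.exists_compact_section
  -- a g > 1 for some g
  have a1 : a 1 = 1 := by
    have h := hahom 1 1
    simp only [mul_one] at h
    nlinarith [hapos 1]
  obtain ⟨g, hg⟩ : ∃ g : G, 1 < a g := by
    obtain ⟨g₀, hg₀⟩ := hantriv
    rcases lt_or_gt_of_ne hg₀ with h | h
    · refine ⟨g₀⁻¹, ?_⟩
      have hi : a g₀ * a g₀⁻¹ = 1 := by rw [← hahom]; simp [a1]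
      nlinarith [hapos g₀, hapos g₀⁻¹]
    · exact ⟨g₀, h⟩
  -- basic facts about V, L
  have h0V : (0 : X) ∈ V := by
    obtain ⟨x, hx⟩ := hrep.nonempty
    simpa using hrep.cone x hx x hx 0 0 le_rfl le_rfl
  have hL0 : L 0 = 0 := by
    have := hsec.map_smul 0 h0V 0 le_rfl
    simpa using this
  have hτ0 : ∀ g' : G, τ g' 0 = 0 := by
    intro g'
    have := hrep.conic_act g' 0 h0V 0 h0V 0 0 le_rfl le_rfl
    simpa using this
  -- the multiplier identity on all of V
  have hmulV : ∀ g' : G, ∀ x ∈ V, L (τ g' x) = a g' * L x := by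
    intro g' x hx
    by_cases hx0 : x = 0
    · simp [hx0, hτ0, hL0]
    · have hc : 0 < L x := hsec.pos x hx hx0
      have hzV : (L x)⁻¹ • x ∈ V := coneSmulMem hrep.cone hx (inv_pos.mpr hc).le
      have hzQ : (L x)⁻¹ • x ∈ Q := memSectionOfNe hsec hrep.cone hx hx0
      have hxeq : x = (L x) • ((L x)⁻¹ • x) := by
        rw [smul_smul]; field_simp; rw [one_smul]
      have hsm : τ g' ((L x) • ((L x)⁻¹ • x)) = (L x) • τ g' ((L x)⁻¹ • x) := by
        have := hrep.conic_act g' _ hzV _ hzV (L x) 0 hc.le le_rfl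
        simpa using this
      have key : L (τ g' x) = (L x) * a g' := by
        conv_lhs => rw [hxeq]
        rw [hsm, hsec.map_smul _ (hrep.mapsTo g' hzV) _ hc.le, hσ g' _ hzQ]
      rw [key]; ring
  -- basic facts about V'
  have h0V' : (0 : Y) ∈ V' := by
    obtain ⟨x, hx⟩ := hrep'.nonempty
    simpa using hrep'.cone x hx x hx 0 0 le_rfl le_rfl
  have hL'0 : L' 0 = 0 := by
    have := hsec'.map_smul 0 h0V' 0 le_rfl
    simpa using this
  have hL₀0 : L₀ 0 = 0 := by
    have := hsec₀.map_smul 0 h0V' 0 le_rfl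
    simpa using this
  have hQ'sub : Q' ⊆ V' := by rw [hsec'.sect_eq]; exact fun x hx => hx.1
  have hQ₀sub : Q₀ ⊆ V' := by rw [hsec₀.sect_eq]; exact fun x hx => hx.1
  have hQ'ne0 : ∀ w ∈ Q', w ≠ 0 := by
    intro w hw hw0
    rw [hsec'.sect_eq] at hw
    rw [hw0] at hw
    have h2 := hw.2
    rw [hL'0] at h2
    exact one_ne_zero h2.symm
  have hQ₀ne0 : ∀ w ∈ Q₀, w ≠ 0 := by
    intro w hw hw0
    rw [hsec₀.sect_eq] at hw
    rw [hw0] at hw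
    have h2 := hw.2
    rw [hL₀0] at h2
    exact one_ne_zero h2.symm
  -- a nonzero element of V'
  obtain ⟨y, hyV, hy0⟩ : ∃ y ∈ V', y ≠ 0 := by
    by_contra h
    push_neg at h
    apply hrep'.ne_zero
    apply Set.Subset.antisymm
    · intro z hz; simpa using h z hz
    · intro z hz
      simp only [Set.mem_singleton_iff] at hz
      subst hz; exact h0V'
  -- the starting point in the invariant section Q'
  set y₀ : Y := (L' y)⁻¹ • y with hy₀def
  have hy₀Q' : y₀ ∈ Q' := memSectionOfNe hsec' hrep'.cone hyV hy0
  -- Q₀ is nonempty and compact; extremize L' and L ∘ φ on it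
  have hQ₀ne : Q₀.Nonempty := ⟨(L₀ y)⁻¹ • y, memSectionOfNe hsec₀ hrep'.cone hyV hy0⟩
  have hcontL' : ContinuousOn L' Q₀ := hsec'.continuousOn.mono hQ₀sub
  have hcontL'' : ContinuousOn (fun w => L (φ w)) Q₀ :=
    (hsec.continuousOn.comp hφ.continuousOn hφ.mapsTo).mono hQ₀sub
  obtain ⟨zm, hzmQ₀, hzm⟩ := hcomp₀.exists_isMinOn hQ₀ne hcontL'
  obtain ⟨zM, hzMQ₀, hzM⟩ := hcomp₀.exists_isMaxOn hQ₀ne hcontL''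
  have hm'pos : 0 < L' zm := hsec'.pos zm (hQ₀sub hzmQ₀) (hQ₀ne0 zm hzmQ₀)
  set m' : ℝ := L' zm with hm'def
  set M'' : ℝ := L (φ zM) with hM''def
  -- the key uniform bound on Q'
  have hbound : ∀ w ∈ Q', L (φ w) ≤ M'' / m' := by
    intro w hw
    have hwV' : w ∈ V' := hQ'sub hw
    have hw0 : w ≠ 0 := hQ'ne0 w hw
    have hL'w : L' w = 1 := by
      rw [hsec'.sect_eq] at hw; exact hw.2
    have htpos : 0 < L₀ w := hsec₀.pos w hwV' hw0
    set t : ℝ := L₀ w with htdef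
    have hzQ₀ : t⁻¹ • w ∈ Q₀ := memSectionOfNe hsec₀ hrep'.cone hwV' hw0
    have hL'z : L' (t⁻¹ • w) = t⁻¹ := by
      rw [hsec'.map_smul w hwV' _ (inv_pos.mpr htpos).le, hL'w, mul_one]
    have h1 : m' ≤ t⁻¹ := by
      have := hzm hzQ₀
      simpa [hL'z] using this
    have hφsm : φ (t⁻¹ • w) = t⁻¹ • φ w := by
      have := hφ.conic w hwV' w hwV' t⁻¹ 0 (inv_pos.mpr htpos).le le_rfl
      simpa using this
    have hL''z : L (φ (t⁻¹ • w)) = t⁻¹ * L (φ w) := by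
      rw [hφsm, hsec.map_smul _ (hφ.mapsTo hwV') _ (inv_pos.mpr htpos).le]
    have h2 : t⁻¹ * L (φ w) ≤ M'' := by
      have := hzM hzQ₀
      simpa [hL''z, hM''def] using this
    have hLφnn : 0 ≤ L (φ w) := hsec.nonneg _ (hφ.mapsTo hwV')
    have hM''nn : 0 ≤ M'' := hsec.nonneg _ (hφ.mapsTo (hQ₀sub hzMQ₀))
    have ht_le : t ≤ m'⁻¹ := by
      rw [← inv_inv t]
      exact inv_anti₀ hm'pos h1
    rw [div_eq_mul_inv]
    calc L (φ w) = t * (t⁻¹ * L (φ w)) := by field_simp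
    _ ≤ t * M'' := mul_le_mul_of_nonneg_left h2 htpos.le
    _ ≤ m'⁻¹ * M'' := mul_le_mul_of_nonneg_right ht_le hM''nn
    _ = M'' * m'⁻¹ := by ring
  -- the iterated orbit in Q'
  have hy₀V' : y₀ ∈ V' := hQ'sub hy₀Q'
  have hy₀ne : y₀ ≠ 0 := hQ'ne0 y₀ hy₀Q'
  have hφy₀pos : 0 < L (φ y₀) :=
    hsec.pos _ (hφ.mapsTo hy₀V') (hφ.ne_zero y₀ hy₀V' hy₀ne)
  have hiter : ∀ n : ℕ, (η g)^[n] y₀ ∈ Q' ∧ L (φ ((η g)^[n] y₀)) = (a g) ^ n * L (φ y₀) := by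
    intro n
    induction n with
    | zero => simpa using hy₀Q'
    | succ n ih =>
      obtain ⟨hmem, hval⟩ := ih
      have hmemV' : (η g)^[n] y₀ ∈ V' := hQ'sub hmem
      constructor
      · rw [Function.iterate_succ_apply']
        exact hinvQ' g hmem
      · rw [Function.iterate_succ_apply', hφ.equivariant g _ hmemV',
          hmulV g _ (hφ.mapsTo hmemV'), hval, pow_succ]
        ring
  -- derive the contradiction
  obtain ⟨n, hn⟩ := pow_unbounded_of_one_lt (M'' / m' / L (φ y₀)) hg
  obtain ⟨hmem, hval⟩ := hiter n
  have hle := hbound _ hmem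
  rw [hval] at hle
  have hlt : M'' / m' < (a g) ^ n * L (φ y₀) := by
    rw [div_lt_iff₀ hφy₀pos] at hn
    linarith
  linarith
end

section
/- Let Y be a compact Hausdorff space with a continuous minimal action of a topological group G, and let σ : G × Y → ℝ>0 be a multiplier of this action that is bounded above. Then σ is a trivial multiplier: there exists a continuous function f : Y → ℝ>0 with σ(g,y) = f(g·y)/f(y) for all g ∈ G and y ∈ Y. -/
open Set Filter

private lemma lsc_const_mul_aux {α : Type*} [TopologicalSpace α] {c : ℝ} (hc : 0 < c)
    {f : α → ℝ} (hf : LowerSemicontinuous f) : LowerSemicontinuous fun x => c * f x := by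
  intro x t ht
  have ht' : t < c * f x := ht
  have h1 : t / c < f x := by
    rw [div_lt_iff₀ hc]; nlinarith
  filter_upwards [hf x (t / c) h1] with w hw
  have h2 : t < f w * c := (div_lt_iff₀ hc).1 hw
  nlinarith

/-- Let `Y` be a compact Hausdorff space with a continuous minimal action of
a topological group `G`, and let `σ : G × Y → ℝ>0` be a multiplier of this action that is
bounded above.  Then `σ` is a trivial multiplier: there exists a continuous function
`f : Y → ℝ>0` with `σ(g,y) = f(g·y)/f(y)` for all `g ∈ G` and `y ∈ Y`. -/
theorem stmt_16 {G Y : Type*} [Group G] [TopologicalSpace G] [IsTopologicalGroup G]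
    [TopologicalSpace Y] [CompactSpace Y] [T2Space Y]
    [MulAction G Y] [ContinuousSMul G Y]
    -- the action is minimal: every orbit is dense
    (hmin : ∀ y : Y, Dense {z : Y | ∃ g : G, z = g • y})
    -- `σ` is a multiplier of the action
    (σ : G → Y → ℝ)
    (hσcont : Continuous fun p : G × Y => σ p.1 p.2)
    (hσpos : ∀ (g : G) (y : Y), 0 < σ g y)
    (hσmult : ∀ (g γ : G) (y : Y), σ (g * γ) y = σ g (γ • y) * σ γ y)
    -- `σ` is bounded above
    (M : ℝ) (hσbdd : ∀ (g : G) (y : Y), σ g y ≤ M) :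
    ∃ f : Y → ℝ, Continuous f ∧ (∀ y : Y, 0 < f y) ∧
      ∀ (g : G) (y : Y), σ g y = f (g • y) / f y := by
  rcases isEmpty_or_nonempty Y with hY | hY
  · exact ⟨fun _ => 1, continuous_const, fun y => isEmptyElim y, fun g y => isEmptyElim y⟩
  -- σ 1 y = 1
  have hσ1 : ∀ y : Y, σ 1 y = 1 := by
    intro y
    have := hσmult 1 1 y
    rw [one_mul, one_smul] at this
    have hp := hσpos 1 y
    nlinarith
  have hM1 : (1 : ℝ) ≤ M := by
    obtain ⟨y⟩ := hY
    have := hσbdd 1 y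
    rw [hσ1 y] at this; exact this
  have hMpos : (0 : ℝ) < M := lt_of_lt_of_le one_pos hM1
  -- lower bound
  have hσlow : ∀ (g : G) (y : Y), M⁻¹ ≤ σ g y := by
    intro g y
    have h1 : σ g⁻¹ (g • y) * σ g y = 1 := by
      rw [← hσmult, inv_mul_cancel, hσ1]
    have h2 := hσbdd g⁻¹ (g • y)
    have h3 := hσpos g⁻¹ (g • y)
    have h4 := hσpos g y
    rw [inv_eq_one_div, div_le_iff₀ hMpos]
    nlinarith
  set f : Y → ℝ := fun y => ⨆ g : G, σ g y with hfdef
  set h : Y → ℝ := fun y => ⨅ g : G, σ g y with hhdef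
  have bddA : ∀ y : Y, BddAbove (Set.range fun g : G => σ g y) := by
    intro y; exact ⟨M, by rintro _ ⟨g, rfl⟩; exact hσbdd g y⟩
  have bddB : ∀ y : Y, BddBelow (Set.range fun g : G => σ g y) := by
    intro y; exact ⟨M⁻¹, by rintro _ ⟨g, rfl⟩; exact hσlow g y⟩
  have hf_ge : ∀ y : Y, 1 ≤ f y := by
    intro y
    have := le_ciSup (bddA y) (1 : G)
    rw [hσ1 y] at this; exact this
  have hh_pos : ∀ y : Y, 0 < h y := by
    intro y
    have : M⁻¹ ≤ h y := le_ciInf fun g => hσlow g y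
    have : (0:ℝ) < M⁻¹ := inv_pos.2 hMpos
    linarith [le_ciInf fun g : G => hσlow g y]
  have hf_pos : ∀ y : Y, 0 < f y := fun y => lt_of_lt_of_le one_pos (hf_ge y)
  -- reindexing
  have hrange : ∀ (γ : G) (y : Y),
      Set.range (fun g : G => σ (g * γ) y) = Set.range (fun g : G => σ g y) := by
    intro γ y
    ext t
    constructor
    · rintro ⟨g, rfl⟩; exact ⟨g * γ, rfl⟩
    · rintro ⟨g, rfl⟩; exact ⟨g * γ⁻¹, by simp⟩
  -- cocycle identities
  have key1 : ∀ (γ : G) (y : Y), f y = f (γ • y) * σ γ y := by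
    intro γ y
    have e1 : f (γ • y) * σ γ y = ⨆ g : G, σ g (γ • y) * σ γ y :=
      Real.iSup_mul_of_nonneg (le_of_lt (hσpos γ y)) _
    have e2 : (⨆ g : G, σ g (γ • y) * σ γ y) = ⨆ g : G, σ (g * γ) y := by
      exact iSup_congr fun g => (hσmult g γ y).symm
    have e3 : (⨆ g : G, σ (g * γ) y) = ⨆ g : G, σ g y := by
      rw [iSup, iSup, hrange γ y]
    rw [e1, e2, e3]
  have key2 : ∀ (γ : G) (y : Y), h y = h (γ • y) * σ γ y := by
    intro γ y
    have e1 : h (γ • y) * σ γ y = ⨅ g : G, σ g (γ • y) * σ γ y :=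
      Real.iInf_mul_of_nonneg (le_of_lt (hσpos γ y)) _
    have e2 : (⨅ g : G, σ g (γ • y) * σ γ y) = ⨅ g : G, σ (g * γ) y := by
      exact iInf_congr fun g => (hσmult g γ y).symm
    have e3 : (⨅ g : G, σ (g * γ) y) = ⨅ g : G, σ g y := by
      rw [iInf, iInf, hrange γ y]
    rw [e1, e2, e3]
  -- invariance of cross products
  have inv : ∀ (g : G) (y : Y), f (g • y) * h y = h (g • y) * f y := by
    intro g y
    rw [key1 g y, key2 g y]; ring
  -- semicontinuity
  have hlsc : LowerSemicontinuous f :=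
    lowerSemicontinuous_ciSup bddA fun g =>
      (hσcont.comp (Continuous.prodMk_right g)).lowerSemicontinuous
  have husc : UpperSemicontinuous h :=
    upperSemicontinuous_ciInf bddB fun g =>
      (hσcont.comp (Continuous.prodMk_right g)).upperSemicontinuous
  -- main inequality
  have hmain : ∀ y z : Y, f y * h z ≤ f z * h y := by
    intro y z
    by_contra hlt
    push_neg at hlt
    have hDpos : 0 < f y * h z - f z * h y := by linarith
    set D := f y * h z - f z * h y with hD
    have hhz := hh_pos z
    have hfz := hf_pos z
    have hhy := hh_pos y
    set ε := D / (2 * (h z + f z)) with hε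
    have hεpos : 0 < ε := by positivity
    have hεD : ε * (2 * (h z + f z)) = D := by
      rw [hε]; field_simp
    have hev1 := hlsc y (f y - ε) (by linarith)
    have hev2 := husc y (h y + ε) (by linarith)
    obtain ⟨w, hw, hworb⟩ := mem_closure_iff_nhds.1 (hmin z y) _ (hev1.and hev2)
    obtain ⟨g, rfl⟩ := hworb
    obtain ⟨hw1, hw2⟩ := hw
    have hinv := inv g z
    have hbpos := hh_pos (g • z)
    nlinarith
  have heq : ∀ y z : Y, f y * h z = f z * h y := fun y z =>
    le_antisymm (hmain y z) (by linarith [hmain z y])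
  obtain ⟨z0⟩ := hY
  have hfz0 : f z0 ≠ 0 := ne_of_gt (hf_pos z0)
  set c : ℝ := h z0 / f z0 with hc
  have hcpos : 0 < c := div_pos (hh_pos z0) (hf_pos z0)
  have hyc : ∀ y : Y, h y = c * f y := by
    intro y
    rw [hc]
    field_simp
    linarith [heq y z0]
  have hhcont : Continuous h := by
    rw [continuous_iff_lower_upperSemicontinuous]
    refine ⟨?_, husc⟩
    rw [show h = fun y => c * f y from funext hyc]
    exact lsc_const_mul_aux hcpos hlsc
  refine ⟨fun y => (h y)⁻¹, hhcont.inv₀ fun y => ne_of_gt (hh_pos y), fun y => inv_pos.2 (hh_pos y), ?_⟩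
  intro g y
  have := key2 g y
  have h1 := hh_pos y
  have h2 := hh_pos (g • y)
  field_simp
  linarith [key2 g y]
end
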